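/- arXiv:1909.06981 — 10 statements merged into one kernel-verified Lean document; each statement's English description precedes it below -/
import Mathlib

section
/- The α-Tsallis entropy T_α(p) = (1/(1−α))(Σ_i p_i^α − 1) on the probability simplex in ℝ^d is Lipschitz continuous with respect to total variation distance for α > 1, with optimal Lipschitz constant α/(α−1): for all probability vectors p, q, |T_α(p) − T_α(q)| ≤ (α/(α−1))·TV(p,q), and no smaller constant works. -/
open Finset Real Filter

lemma rpow_sub_rpow_le' {α : ℝ} (hα : 1 < α) {x y : ℝ} (hy : 0 ≤ y) (hyx : y ≤ x) (hx : x ≤ 1) :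
    x ^ α - y ^ α ≤ α * (x - y) := by
  have hα0 : (0:ℝ) < α := lt_trans one_pos hα
  have hder : ∀ t ∈ Set.Icc (0:ℝ) 1, HasDerivWithinAt (fun t : ℝ => t ^ α)
      (α * t ^ (α - 1)) (Set.Icc 0 1) t := fun t _ =>
    (Real.hasDerivAt_rpow_const (Or.inr hα.le)).hasDerivWithinAt
  have hbound : ∀ t ∈ Set.Icc (0:ℝ) 1, ‖α * t ^ (α - 1)‖ ≤ α := by
    intro t ht
    rw [Real.norm_eq_abs, abs_mul, abs_of_pos hα0, abs_of_nonneg (Real.rpow_nonneg ht.1 _)]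
    nlinarith [Real.rpow_le_one ht.1 ht.2 (by linarith : (0:ℝ) ≤ α - 1)]
  have := Convex.norm_image_sub_le_of_norm_hasDerivWithin_le hder hbound (convex_Icc 0 1)
    ⟨hy, hyx.trans hx⟩ ⟨hy.trans hyx, hx⟩
  rw [Real.norm_eq_abs, Real.norm_eq_abs] at this
  calc x ^ α - y ^ α ≤ |x ^ α - y ^ α| := le_abs_self _
    _ ≤ α * |x - y| := this
    _ = α * (x - y) := by rw [abs_of_nonneg (by linarith)]

lemma key_sum {d : ℕ} {α : ℝ} (hα : 1 < α) (p q : Fin d → ℝ)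
    (hp0 : ∀ i, 0 ≤ p i) (hp1 : ∑ i, p i = 1)
    (hq0 : ∀ i, 0 ≤ q i) (hq1 : ∑ i, q i = 1) :
    (∑ i, p i ^ α) - ∑ i, q i ^ α ≤ α * ((1 / 2) * ∑ i, |p i - q i|) := by
  classical
  set S := Finset.univ.filter (fun i : Fin d => q i ≤ p i) with hS
  set S' := Finset.univ.filter (fun i : Fin d => ¬ q i ≤ p i) with hS'
  have hple : ∀ i, p i ≤ 1 := fun i => by
    calc p i ≤ ∑ j, p j := Finset.single_le_sum (fun j _ => hp0 j) (mem_univ i)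
      _ = 1 := hp1
  have hqle : ∀ i, q i ≤ 1 := fun i => by
    calc q i ≤ ∑ j, q j := Finset.single_le_sum (fun j _ => hq0 j) (mem_univ i)
      _ = 1 := hq1
  have habs : ∑ i, |p i - q i| = ∑ i ∈ S, (p i - q i) + ∑ i ∈ S', (q i - p i) := by
    rw [← Finset.sum_filter_add_sum_filter_not Finset.univ (fun i => q i ≤ p i) (fun i => |p i - q i|)]
    congr 1
    · exact Finset.sum_congr rfl fun i hi => abs_of_nonneg (by
        have := (Finset.mem_filter.mp hi).2; linarith)
    · exact Finset.sum_congr rfl fun i hi => by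
        have := (Finset.mem_filter.mp hi).2
        rw [abs_of_neg (by push_neg at this; linarith)]; ring
  have hzero : ∑ i ∈ S, (p i - q i) - ∑ i ∈ S', (q i - p i) = 0 := by
    have h1 : ∑ i ∈ S, (p i - q i) + ∑ i ∈ S', (p i - q i) = ∑ i, (p i - q i) :=
      Finset.sum_filter_add_sum_filter_not _ _ _
    have h2 : ∑ i, (p i - q i) = 0 := by
      rw [Finset.sum_sub_distrib, hp1, hq1]; ring
    have h3 : ∑ i ∈ S', (q i - p i) = - ∑ i ∈ S', (p i - q i) := by
      rw [← Finset.sum_neg_distrib]; exact Finset.sum_congr rfl fun i _ => by ring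
    linarith
  have hTV : ∑ i ∈ S, (p i - q i) = (1 / 2) * ∑ i, |p i - q i| := by
    rw [habs]; linarith
  have hsplit : (∑ i, p i ^ α) - ∑ i, q i ^ α
      = ∑ i ∈ S, (p i ^ α - q i ^ α) + ∑ i ∈ S', (p i ^ α - q i ^ α) := by
    rw [Finset.sum_filter_add_sum_filter_not Finset.univ (fun i => q i ≤ p i)
      (fun i => p i ^ α - q i ^ α), Finset.sum_sub_distrib]
  have h1 : ∑ i ∈ S, (p i ^ α - q i ^ α) ≤ α * ∑ i ∈ S, (p i - q i) := by
    rw [Finset.mul_sum]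
    refine Finset.sum_le_sum fun i hi => ?_
    exact rpow_sub_rpow_le' hα (hq0 i) (Finset.mem_filter.mp hi).2 (hple i)
  have h2 : ∑ i ∈ S', (p i ^ α - q i ^ α) ≤ 0 := by
    refine Finset.sum_nonpos fun i hi => ?_
    have hlt : p i ≤ q i := le_of_lt (not_le.mp (Finset.mem_filter.mp hi).2)
    have := Real.rpow_le_rpow (hp0 i) hlt (le_of_lt (lt_trans one_pos hα))
    linarith
  rw [hsplit, ← hTV]
  linarith

lemma sum_two {d : ℕ} (i0 i1 : Fin d) (hne : i0 ≠ i1) (a b : ℝ) (f : Fin d → ℝ)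
    (hf : ∀ i, f i = if i = i0 then a else if i = i1 then b else 0) :
    ∑ i, f i = a + b := by
  have h : ∀ i, f i = (if i = i0 then a else 0) + (if i = i1 then b else 0) := by
    intro i
    rw [hf]
    by_cases h1 : i = i0
    · subst h1; simp [hne]
    · simp [h1]
  simp [h, Finset.sum_add_distrib]

/-- The α-Tsallis entropy is Lipschitz w.r.t. total variation distance for α > 1,
with optimal Lipschitz constant α/(α-1). -/
theorem stmt5 {d : ℕ} (hd : 2 ≤ d) (α : ℝ) (hα : 1 < α)
    (T : (Fin d → ℝ) → ℝ)
    (hT : ∀ p, T p = (1 / (1 - α)) * ((∑ i, p i ^ α) - 1)) :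
    (∀ p q : Fin d → ℝ,
        ((∀ i, 0 ≤ p i) ∧ ∑ i, p i = 1) → ((∀ i, 0 ≤ q i) ∧ ∑ i, q i = 1) →
        |T p - T q| ≤ (α / (α - 1)) * ((1 / 2) * ∑ i, |p i - q i|)) ∧
      (∀ k : ℝ,
        (∀ p q : Fin d → ℝ,
          ((∀ i, 0 ≤ p i) ∧ ∑ i, p i = 1) → ((∀ i, 0 ≤ q i) ∧ ∑ i, q i = 1) →
          |T p - T q| ≤ k * ((1 / 2) * ∑ i, |p i - q i|)) →
        α / (α - 1) ≤ k) := by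
  constructor
  · intro p q ⟨hp0, hp1⟩ ⟨hq0, hq1⟩
    have hα1 : (0:ℝ) < α - 1 := by linarith
    have hTpq : T p - T q = (1 / (1 - α)) * ((∑ i, p i ^ α) - ∑ i, q i ^ α) := by
      rw [hT p, hT q]; ring
    have hsym : ∑ i, |q i - p i| = ∑ i, |p i - q i| :=
      Finset.sum_congr rfl fun i _ => abs_sub_comm _ _
    have h1 := key_sum hα p q hp0 hp1 hq0 hq1
    have h2 := key_sum hα q p hq0 hq1 hp0 hp1
    rw [hsym] at h2
    have habs : |(∑ i, p i ^ α) - ∑ i, q i ^ α| ≤ α * ((1 / 2) * ∑ i, |p i - q i|) := by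
      rw [abs_le]; constructor <;> linarith
    rw [hTpq, abs_mul]
    have : |(1:ℝ) / (1 - α)| = 1 / (α - 1) := by
      rw [abs_div, abs_one, abs_of_neg (by linarith : (1:ℝ) - α < 0)]; ring_nf
    rw [this, div_mul_eq_mul_div, div_mul_eq_mul_div, one_mul]
    rw [div_le_div_iff₀ hα1 hα1]
    have hTVnn : 0 ≤ (1 / 2) * ∑ i, |p i - q i| := by positivity
    nlinarith
  · intro k hk
    have hα0 : (0:ℝ) < α := lt_trans one_pos hα
    have hα1 : (0:ℝ) < α - 1 := by linarith
    set i0 : Fin d := ⟨0, by omega⟩ with hi0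
    set i1 : Fin d := ⟨1, by omega⟩ with hi1
    have hne : i0 ≠ i1 := by simp [hi0, hi1, Fin.ext_iff]
    set F : ℝ → ℝ := fun ε => (1 - (1 - ε) ^ α - ε ^ α) / ((α - 1) * ε) with hF
    -- Step 1: tendsto
    have hderiv : HasDerivAt (fun ε : ℝ => (1 - ε) ^ α) (-α) 0 := by
      have h1 : HasDerivAt (fun y : ℝ => y ^ α) (α * (1:ℝ) ^ (α - 1)) (1:ℝ) :=
        Real.hasDerivAt_rpow_const (Or.inl one_ne_zero)
      have h2 : HasDerivAt (fun ε : ℝ => 1 - ε) (-1) 0 := by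
        simpa using (hasDerivAt_id (0:ℝ)).const_sub 1
      have h3 := HasDerivAt.comp (0:ℝ) (by simpa using h1) h2
      exact (by simpa [Real.one_rpow] using h3 :
        HasDerivAt ((fun y : ℝ => y ^ α) ∘ fun ε : ℝ => 1 - ε) (-α) 0)
    have hslope : Tendsto (fun ε : ℝ => (1 - (1 - ε) ^ α) / ε) (nhdsWithin 0 (Set.Ioi 0))
        (nhds α) := by
      have := hasDerivAt_iff_tendsto_slope.mp hderiv
      have h2 : Tendsto (slope (fun ε : ℝ => (1 - ε) ^ α) 0) (nhdsWithin 0 (Set.Ioi 0))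
          (nhds (-α)) := this.mono_left (nhdsWithin_mono 0 (by
            intro x hx
            simp only [Set.mem_compl_iff, Set.mem_singleton_iff]
            exact ne_of_gt hx))
      have h3 := h2.neg
      rw [neg_neg] at h3
      refine h3.congr' ?_
      filter_upwards [self_mem_nhdsWithin] with ε hε
      have hε0 : ε ≠ 0 := ne_of_gt hε
      simp only [slope_def_field, sub_zero, Real.one_rpow]
      rw [← neg_div, neg_sub]
    have hrpow : Tendsto (fun ε : ℝ => ε ^ (α - 1)) (nhdsWithin 0 (Set.Ioi 0)) (nhds 0) := by
      have h1 : ContinuousAt (fun x : ℝ => x ^ (α - 1)) 0 :=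
        Real.continuousAt_rpow_const 0 (α - 1) (Or.inr (by linarith))
      have := h1.tendsto.mono_left (nhdsWithin_le_nhds (s := Set.Ioi 0))
      simpa [Real.zero_rpow (ne_of_gt hα1)] using this
    have htend : Tendsto F (nhdsWithin 0 (Set.Ioi 0)) (nhds (α / (α - 1))) := by
      have h1 : Tendsto (fun ε : ℝ => ((1 - (1 - ε) ^ α) / ε - ε ^ (α - 1)) * (α - 1)⁻¹)
          (nhdsWithin 0 (Set.Ioi 0)) (nhds ((α - 0) * (α - 1)⁻¹)) :=
        (hslope.sub hrpow).mul_const _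
      have h2 : (α - 0) * (α - 1)⁻¹ = α / (α - 1) := by ring
      rw [h2] at h1
      refine h1.congr' ?_
      filter_upwards [self_mem_nhdsWithin] with ε hε
      have hε0 : (0:ℝ) < ε := hε
      rw [hF]
      have : ε ^ (α - 1) = ε ^ α / ε := by
        rw [Real.rpow_sub hε0, Real.rpow_one]
      rw [this, div_sub_div_same, ← div_eq_mul_inv, div_div, mul_comm ε (α - 1)]
    -- Step 2: eventual bound
    have hev : ∀ᶠ ε in nhdsWithin 0 (Set.Ioi 0), F ε ≤ k := by
      filter_upwards [Ioo_mem_nhdsGT_of_mem (Set.mem_Ico.mpr ⟨le_refl (0:ℝ), one_pos⟩)]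
        with ε hε
      obtain ⟨hε0, hε1⟩ := hε
      set p : Fin d → ℝ := fun i => if i = i0 then 1 else if i = i1 then 0 else 0 with hp
      set q : Fin d → ℝ := fun i => if i = i0 then 1 - ε else if i = i1 then ε else 0 with hq
      have hp0 : ∀ i, 0 ≤ p i := fun i => by rw [hp]; dsimp only; split_ifs <;> norm_num
      have hq0 : ∀ i, 0 ≤ q i := fun i => by rw [hq]; dsimp only; split_ifs <;> linarith
      have hp1 : ∑ i, p i = 1 := by
        rw [sum_two i0 i1 hne 1 0 p (fun i => rfl)]; ring
      have hq1 : ∑ i, q i = 1 := by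
        rw [sum_two i0 i1 hne (1 - ε) ε q (fun i => rfl)]; ring
      have hsp : ∑ i, p i ^ α = 1 := by
        rw [sum_two i0 i1 hne 1 0 (fun i => p i ^ α) (fun i => by
          rw [hp]; dsimp only; split_ifs <;>
            simp [Real.one_rpow, Real.zero_rpow (ne_of_gt hα0)])]
        ring
      have hsq : ∑ i, q i ^ α = (1 - ε) ^ α + ε ^ α := by
        rw [sum_two i0 i1 hne ((1 - ε) ^ α) (ε ^ α) (fun i => q i ^ α) (fun i => by
          rw [hq]; dsimp only; split_ifs <;>
            simp [Real.zero_rpow (ne_of_gt hα0)])]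
      have hsabs : ∑ i, |p i - q i| = 2 * ε := by
        rw [sum_two i0 i1 hne ε ε (fun i => |p i - q i|) (fun i => by
          rw [hp, hq]; dsimp only; split_ifs <;>
            simp [abs_of_pos hε0, abs_of_nonneg hε0.le])]
        ring
      have := hk p q ⟨hp0, hp1⟩ ⟨hq0, hq1⟩
      rw [hT p, hT q, hsp, hsq, hsabs] at this
      have heq : |(1 / (1 - α)) * (1 - 1) - (1 / (1 - α)) * ((1 - ε) ^ α + ε ^ α - 1)|
          = |1 - (1 - ε) ^ α - ε ^ α| / (α - 1) := by
        rw [show (1 / (1 - α)) * (1 - 1) - (1 / (1 - α)) * ((1 - ε) ^ α + ε ^ α - 1)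
          = (1 / (1 - α)) * (1 - (1 - ε) ^ α - ε ^ α) from by ring,
          abs_mul, abs_div, abs_one, abs_of_neg (show (1:ℝ) - α < 0 by linarith),
          neg_sub, div_mul_eq_mul_div, one_mul]
      rw [heq] at this
      rw [hF]
      have hstep : (1 - (1 - ε) ^ α - ε ^ α) / (α - 1) ≤ k * ε := by
        calc (1 - (1 - ε) ^ α - ε ^ α) / (α - 1)
            ≤ |1 - (1 - ε) ^ α - ε ^ α| / (α - 1) := by
              gcongr
              exact le_abs_self _
          _ ≤ k * (1 / 2 * (2 * ε)) := this
          _ = k * ε := by ring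
      rw [div_le_iff₀ (by positivity : (0:ℝ) < (α - 1) * ε)]
      calc 1 - (1 - ε) ^ α - ε ^ α = ((1 - (1 - ε) ^ α - ε ^ α) / (α - 1)) * (α - 1) := by
            field_simp
        _ ≤ (k * ε) * (α - 1) := by nlinarith [hstep]
        _ = k * ((α - 1) * ε) := by ring
    exact le_of_tendsto htend hev
end

section
/- For α > 1 and probability vectors p, q in ℝ^d with TV(p,q) ≤ ε, the α-Rényi entropies satisfy |H_α(p) − H_α(q)| ≤ (d·α/(α−1))·ε/ln 2, where H_α(p) = (1/(1−α))·log₂(Σ_i p_i^α). -/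
open Finset Real

/-- Key log-sum Lipschitz bound along the segment from `q` to `p`. -/
lemma stmt6_aux {d : ℕ} (hdpos : 0 < d) (α ε : ℝ) (hα : 1 < α) (hε : 0 ≤ ε)
    (p q : Fin d → ℝ) (hp0 : ∀ i, 0 ≤ p i) (hp1 : ∑ i, p i = 1)
    (hq0 : ∀ i, 0 ≤ q i) (hq1 : ∑ i, q i = 1)
    (hTV : ∑ i, |p i - q i| ≤ 2 * ε) :
    |Real.log (∑ i, p i ^ α) - Real.log (∑ i, q i ^ α)| ≤ (d : ℝ) * α * ε := by
  haveI : NeZero d := ⟨hdpos.ne'⟩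
  have hd0 : (0:ℝ) < d := by exact_mod_cast hdpos
  have hαpos : (0:ℝ) < α := by linarith
  set Δ : Fin d → ℝ := fun i => p i - q i with hΔdef
  have hΔsum : ∑ i, Δ i = 0 := by
    simp only [hΔdef, Finset.sum_sub_distrib, hp1, hq1, sub_self]
  set r : ℝ → Fin d → ℝ := fun t i => q i + t * Δ i with hrdef
  set S : ℝ → ℝ := fun t => ∑ i, r t i ^ α with hSdef
  set S' : ℝ → ℝ := fun t => ∑ i, (α * r t i ^ (α - 1)) * Δ i with hS'def
  have hrnn : ∀ t ∈ Set.Icc (0:ℝ) 1, ∀ i, 0 ≤ r t i := by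
    intro t ht i
    have h1 := ht.1; have h2 := ht.2
    have hpi := hp0 i; have hqi := hq0 i
    simp only [hrdef, hΔdef]
    nlinarith
  have hrsum : ∀ t, ∑ i, r t i = 1 := by
    intro t
    simp only [hrdef]
    rw [Finset.sum_add_distrib, ← Finset.mul_sum, hΔsum, hq1]
    ring
  have hderiv : ∀ t : ℝ, HasDerivAt S (S' t) t := by
    intro t
    apply HasDerivAt.fun_sum
    intro i _
    have h1 : HasDerivAt (fun s => r s i) (Δ i) t := by
      have h := ((hasDerivAt_id t).mul_const (Δ i)).const_add (q i); rw [one_mul] at h; exact h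
    have h2 : HasDerivAt (fun x : ℝ => x ^ α) (α * r t i ^ (α - 1)) (r t i) :=
      Real.hasDerivAt_rpow_const (Or.inr hα.le)
    exact h2.comp t h1
  have key : ∀ t ∈ Set.Icc (0:ℝ) 1, 0 < S t ∧ |S' t| ≤ ((d : ℝ) * α * ε) * S t := by
    intro t ht
    obtain ⟨j, -, hj⟩ := Finset.exists_max_image Finset.univ (r t) Finset.univ_nonempty
    set m : ℝ := r t j with hmdef
    have hm1 : 1 ≤ (d : ℝ) * m := by
      have h1 : (1:ℝ) = ∑ i, r t i := (hrsum t).symm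
      have h2 : ∑ i, r t i ≤ ∑ _i : Fin d, m :=
        Finset.sum_le_sum fun i _ => hj i (Finset.mem_univ i)
      have h3 : ∑ _i : Fin d, m = (d : ℝ) * m := by
        simp [Finset.sum_const, nsmul_eq_mul]
      linarith
    have hm0 : 0 < m := by nlinarith
    have hSm : m ^ α ≤ S t := by
      have := Finset.single_le_sum (f := fun i => r t i ^ α)
        (fun i _ => Real.rpow_nonneg (hrnn t ht i) α) (Finset.mem_univ j)
      simpa [hSdef] using this
    have hS0 : 0 < S t := lt_of_lt_of_le (Real.rpow_pos_of_pos hm0 α) hSm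
    have hMnn : 0 ≤ m ^ (α - 1) := Real.rpow_nonneg hm0.le _
    have hub : S' t ≤ α * m ^ (α - 1) * ε := by
      have h1 : ∀ i, (α * r t i ^ (α - 1)) * Δ i ≤
          α * m ^ (α - 1) * ((Δ i + |Δ i|) / 2) := by
        intro i
        have hri : 0 ≤ r t i ^ (α - 1) := Real.rpow_nonneg (hrnn t ht i) _
        rcases le_or_gt 0 (Δ i) with h | h
        · have hle : r t i ^ (α - 1) ≤ m ^ (α - 1) :=
            Real.rpow_le_rpow (hrnn t ht i) (hj i (Finset.mem_univ i)) (by linarith)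
          rw [abs_of_nonneg h]
          have h0 : (Δ i + Δ i) / 2 = Δ i := by ring
          rw [h0]
          exact mul_le_mul_of_nonneg_right (mul_le_mul_of_nonneg_left hle hαpos.le) h
        · rw [abs_of_neg h]
          have h0 : (Δ i + -Δ i) / 2 = 0 := by ring
          rw [h0, mul_zero]
          exact mul_nonpos_of_nonneg_of_nonpos (mul_nonneg hαpos.le hri) h.le
      have hsum2 : ∑ i, (Δ i + |Δ i|) / 2 ≤ ε := by
        rw [← Finset.sum_div, Finset.sum_add_distrib, hΔsum]
        simp only [hΔdef] at hTV ⊢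
        linarith
      calc S' t ≤ ∑ i, α * m ^ (α - 1) * ((Δ i + |Δ i|) / 2) :=
            Finset.sum_le_sum fun i _ => h1 i
        _ = α * m ^ (α - 1) * ∑ i, (Δ i + |Δ i|) / 2 := by rw [Finset.mul_sum]
        _ ≤ α * m ^ (α - 1) * ε := by
            have : 0 ≤ α * m ^ (α - 1) := by positivity
            exact mul_le_mul_of_nonneg_left hsum2 this
    have hlb : -(α * m ^ (α - 1) * ε) ≤ S' t := by
      have h1 : ∀ i, -(α * m ^ (α - 1) * ((-Δ i + |Δ i|) / 2)) ≤
          (α * r t i ^ (α - 1)) * Δ i := by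
        intro i
        have hri : 0 ≤ r t i ^ (α - 1) := Real.rpow_nonneg (hrnn t ht i) _
        rcases le_or_gt 0 (Δ i) with h | h
        · rw [abs_of_nonneg h]
          have h0 : (-Δ i + Δ i) / 2 = 0 := by ring
          rw [h0, mul_zero, neg_zero]
          exact mul_nonneg (mul_nonneg hαpos.le hri) h
        · have hle : r t i ^ (α - 1) ≤ m ^ (α - 1) :=
            Real.rpow_le_rpow (hrnn t ht i) (hj i (Finset.mem_univ i)) (by linarith)
          rw [abs_of_neg h]
          have h0 : (-Δ i + -Δ i) / 2 = -Δ i := by ring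
          rw [h0]
          have h2 : α * m ^ (α - 1) * Δ i ≤ α * r t i ^ (α - 1) * Δ i :=
            mul_le_mul_of_nonpos_right (mul_le_mul_of_nonneg_left hle hαpos.le) h.le
          nlinarith [h2]
      have hsum2 : ∑ i, (-Δ i + |Δ i|) / 2 ≤ ε := by
        rw [← Finset.sum_div, Finset.sum_add_distrib]
        have : ∑ i, -Δ i = 0 := by rw [Finset.sum_neg_distrib, hΔsum, neg_zero]
        simp only [hΔdef] at hTV this ⊢
        linarith
      calc -(α * m ^ (α - 1) * ε)
          ≤ -(α * m ^ (α - 1) * ∑ i, (-Δ i + |Δ i|) / 2) := by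
            have : 0 ≤ α * m ^ (α - 1) := by positivity
            exact neg_le_neg (mul_le_mul_of_nonneg_left hsum2 this)
        _ = ∑ i, -(α * m ^ (α - 1) * ((-Δ i + |Δ i|) / 2)) := by
            rw [Finset.sum_neg_distrib, ← Finset.mul_sum]
        _ ≤ S' t := Finset.sum_le_sum fun i _ => h1 i
    have habs : |S' t| ≤ α * m ^ (α - 1) * ε := abs_le.2 ⟨hlb, hub⟩
    refine ⟨hS0, ?_⟩
    have hmα : m ^ α = m ^ (α - 1) * m := by
      rw [← Real.rpow_add_one hm0.ne']
      norm_num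
    calc |S' t| ≤ α * m ^ (α - 1) * ε := habs
      _ = (α * ε) * (m ^ (α - 1)) * 1 := by ring
      _ ≤ (α * ε) * (m ^ (α - 1)) * ((d : ℝ) * m) := by
          have : 0 ≤ (α * ε) * (m ^ (α - 1)) := by positivity
          exact mul_le_mul_of_nonneg_left hm1 this
      _ = ((d : ℝ) * α * ε) * (m ^ (α - 1) * m) := by ring
      _ = ((d : ℝ) * α * ε) * m ^ α := by rw [hmα]
      _ ≤ ((d : ℝ) * α * ε) * S t := by
          have : 0 ≤ (d : ℝ) * α * ε := by positivity
          exact mul_le_mul_of_nonneg_left hSm this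
  -- mean value inequality on [0,1]
  set g : ℝ → ℝ := fun t => Real.log (S t) with hgdef
  set g' : ℝ → ℝ := fun t => (S t)⁻¹ * S' t with hg'def
  have hgd : ∀ t ∈ Set.Icc (0:ℝ) 1, HasDerivWithinAt g (g' t) (Set.Icc (0:ℝ) 1) t := by
    intro t ht
    have hS0 := (key t ht).1
    exact ((Real.hasDerivAt_log hS0.ne').comp t (hderiv t)).hasDerivWithinAt
  have hgb : ∀ t ∈ Set.Icc (0:ℝ) 1, ‖g' t‖ ≤ (d : ℝ) * α * ε := by
    intro t ht
    obtain ⟨hS0, hb⟩ := key t ht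
    rw [Real.norm_eq_abs, hg'def, abs_mul, abs_inv, abs_of_pos hS0]
    rw [inv_mul_le_iff₀ hS0]
    linarith [hb]
  have hmem0 : (0:ℝ) ∈ Set.Icc (0:ℝ) 1 := by norm_num
  have hmem1 : (1:ℝ) ∈ Set.Icc (0:ℝ) 1 := by norm_num
  have hmain := Convex.norm_image_sub_le_of_norm_hasDerivWithin_le hgd hgb
    (convex_Icc 0 1) hmem0 hmem1
  simp only [Real.norm_eq_abs, sub_zero, abs_one, mul_one] at hmain
  have hS1 : S 1 = ∑ i, p i ^ α := by
    refine Finset.sum_congr rfl fun i _ => ?_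
    congr 1
    simp only [hrdef, hΔdef]; ring
  have hS0' : S 0 = ∑ i, q i ^ α := by
    refine Finset.sum_congr rfl fun i _ => ?_
    congr 1
    simp only [hrdef, hΔdef]; ring
  have : g 1 - g 0 = Real.log (∑ i, p i ^ α) - Real.log (∑ i, q i ^ α) := by
    rw [hgdef]; simp only [hS1, hS0']
  rw [← this]
  exact hmain

/-- Lipschitz-type continuity bound for the α-Rényi entropy, α > 1. -/
theorem stmt6 {d : ℕ} (hd : 2 ≤ d) (α : ℝ) (hα : 1 < α) (ε : ℝ) (hε : 0 ≤ ε)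
    (H : (Fin d → ℝ) → ℝ)
    (hH : ∀ p, H p = (1 / (1 - α)) * Real.logb 2 (∑ i, p i ^ α))
    (p q : Fin d → ℝ)
    (hp : (∀ i, 0 ≤ p i) ∧ ∑ i, p i = 1) (hq : (∀ i, 0 ≤ q i) ∧ ∑ i, q i = 1)
    (hTV : (1 / 2) * ∑ i, |p i - q i| ≤ ε) :
    |H p - H q| ≤ ((d : ℝ) * α / (α - 1)) * ε / Real.log 2 := by
  obtain ⟨hp0, hp1⟩ := hp
  obtain ⟨hq0, hq1⟩ := hq
  have hdpos : 0 < d := by omega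
  have hα1 : (0:ℝ) < α - 1 := by linarith
  have hlog2 : 0 < Real.log 2 := Real.log_pos one_lt_two
  have hkey := stmt6_aux hdpos α ε hα hε p q hp0 hp1 hq0 hq1 (by linarith)
  set L1 : ℝ := Real.log (∑ i, p i ^ α) with hL1
  set L0 : ℝ := Real.log (∑ i, q i ^ α) with hL0
  have hne1 : (1:ℝ) - α ≠ 0 := by linarith
  have hne2 : α - 1 ≠ 0 := hα1.ne'
  have hne3 : Real.log 2 ≠ 0 := hlog2.ne'
  have hdiff : H p - H q = (L0 - L1) * (1 / ((α - 1) * Real.log 2)) := by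
    rw [hH, hH, Real.logb, Real.logb, ← hL1, ← hL0]
    field_simp
    ring
  rw [hdiff, abs_mul, abs_of_pos (show 0 < 1 / ((α - 1) * Real.log 2) by positivity)]
  have habs : |L0 - L1| ≤ (d : ℝ) * α * ε := by
    rw [abs_sub_comm]; exact hkey
  calc |L0 - L1| * (1 / ((α - 1) * Real.log 2))
      ≤ ((d : ℝ) * α * ε) * (1 / ((α - 1) * Real.log 2)) := by
        have : 0 ≤ 1 / ((α - 1) * Real.log 2) := by positivity
        exact mul_le_mul_of_nonneg_right habs this
    _ = ((d : ℝ) * α / (α - 1)) * ε / Real.log 2 := by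
        field_simp
end

section
/- The min-entropy H_∞(p) = −log₂(max_i p_i) on the probability simplex in ℝ^d is Lipschitz continuous with respect to total variation distance with optimal Lipschitz constant d/ln 2. -/
open Finset Real


lemma halfsum {d : ℕ} (p q : Fin d → ℝ) (hp : ∑ i, p i = 1) (hq : ∑ i, q i = 1) :
    ∑ i, max (q i - p i) 0 = (1/2) * ∑ i, |p i - q i| := by
  have h : ∀ i, max (q i - p i) 0 = ((q i - p i) + |p i - q i|)/2 := by
    intro i; rw [abs_sub_comm]
    rcases le_total 0 (q i - p i) with h|h
    · rw [max_eq_left h, abs_of_nonneg h]; ring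
    · rw [max_eq_right h, abs_of_nonpos h]; ring
  simp_rw [h]
  rw [← Finset.sum_div, Finset.sum_add_distrib, Finset.sum_sub_distrib, hp, hq]
  ring

lemma key {d : ℕ} (hne : (Finset.univ : Finset (Fin d)).Nonempty)
    (p q : Fin d → ℝ) (hp0 : ∀ i, 0 ≤ p i) (hp1 : ∑ i, p i = 1)
    (hq0 : ∀ i, 0 ≤ q i) (hq1 : ∑ i, q i = 1) :
    Real.log (Finset.univ.sup' hne q) - Real.log (Finset.univ.sup' hne p)
      ≤ d * ((1/2) * ∑ i, |p i - q i|) := by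
  set Mp := Finset.univ.sup' hne p with hMp
  set Mq := Finset.univ.sup' hne q with hMq
  have hcard : (Finset.univ : Finset (Fin d)).card = d := by simp
  have hdpos : (0:ℝ) < d := by
    have := Finset.card_pos.mpr hne
    rw [hcard] at this
    exact_mod_cast this
  have hMplb : 1 ≤ d * Mp := by
    have : (1:ℝ) = ∑ i, p i := hp1.symm
    have h2 : ∑ i, p i ≤ ∑ _i : Fin d, Mp :=
      Finset.sum_le_sum fun i _ => Finset.le_sup' p (Finset.mem_univ i)
    simp only [Finset.sum_const, hcard, nsmul_eq_mul] at h2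
    linarith
  have hMqlb : 1 ≤ d * Mq := by
    have h2 : ∑ i, q i ≤ ∑ _i : Fin d, Mq :=
      Finset.sum_le_sum fun i _ => Finset.le_sup' q (Finset.mem_univ i)
    simp only [Finset.sum_const, hcard, nsmul_eq_mul] at h2
    linarith
  have hMppos : 0 < Mp := by nlinarith
  have hMqpos : 0 < Mq := by nlinarith
  have hS : Mq - Mp ≤ (1/2) * ∑ i, |p i - q i| := by
    obtain ⟨j, -, hj⟩ := Finset.exists_mem_eq_sup' hne q
    have h1 : p j ≤ Mp := Finset.le_sup' p (Finset.mem_univ j)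
    have h2 : q j - p j ≤ max (q j - p j) 0 := le_max_left _ _
    have h3 : max (q j - p j) 0 ≤ ∑ i, max (q i - p i) 0 :=
      Finset.single_le_sum (f := fun i => max (q i - p i) 0)
        (fun i _ => le_max_right _ _) (Finset.mem_univ j)
    rw [halfsum p q hp1 hq1] at h3
    have h4 : Mq = q j := hj
    linarith
  rcases le_total Mq Mp with h | h
  · have h0 : Real.log Mq ≤ Real.log Mp := Real.log_le_log hMqpos h
    have hSnn : 0 ≤ (1/2) * ∑ i, |p i - q i| := by
      positivity
    nlinarith
  · have h1 : Real.log (Mq / Mp) ≤ Mq / Mp - 1 :=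
      Real.log_le_sub_one_of_pos (div_pos hMqpos hMppos)
    rw [Real.log_div hMqpos.ne' hMppos.ne'] at h1
    have h2 : Mq / Mp - 1 ≤ d * (Mq - Mp) := by
      rw [div_sub_one hMppos.ne', div_le_iff₀ hMppos]
      nlinarith
    have h3 : (d:ℝ) * (Mq - Mp) ≤ d * ((1/2) * ∑ i, |p i - q i|) := by
      exact mul_le_mul_of_nonneg_left hS hdpos.le
    linarith


noncomputable def qfun (d : ℕ) (i0 i1 : Fin d) (ε : ℝ) : Fin d → ℝ :=
  fun i => 1/d + (if i = i1 then ε else 0) - (if i = i0 then ε else 0)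

lemma qfun_nonneg {d : ℕ} (hd0 : 0 < (d:ℝ)) (i0 i1 : Fin d) {ε : ℝ}
    (hε : 0 < ε) (hεd : ε ≤ 1/d) (i : Fin d) : 0 ≤ qfun d i0 i1 ε i := by
  have h : (0:ℝ) < 1/d := by positivity
  unfold qfun; split_ifs <;> linarith

lemma qfun_sum {d : ℕ} (hd0 : 0 < (d:ℝ)) (i0 i1 : Fin d) (ε : ℝ) :
    ∑ i, qfun d i0 i1 ε i = 1 := by
  unfold qfun
  rw [Finset.sum_sub_distrib, Finset.sum_add_distrib, Finset.sum_ite_eq' Finset.univ i1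
    (fun _ => ε), Finset.sum_ite_eq' Finset.univ i0 (fun _ => ε), Finset.sum_const,
    Finset.card_univ, Fintype.card_fin]
  simp only [Finset.mem_univ, if_true, nsmul_eq_mul]
  field_simp
  ring

lemma qfun_absdiff {d : ℕ} (i0 i1 : Fin d) (hi : i1 ≠ i0) {ε : ℝ} (hε : 0 < ε) :
    ∑ i, |(1:ℝ)/d - qfun d i0 i1 ε i| = 2*ε := by
  have h : ∀ i, |(1:ℝ)/d - qfun d i0 i1 ε i|
      = (if i = i1 then ε else 0) + (if i = i0 then ε else 0) := by
    intro i
    unfold qfun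
    split_ifs with h1 h2 h2
    · exact absurd (h1.symm.trans h2) hi
    · rw [show (1:ℝ)/d - (1/d + ε - 0) = -ε by ring, abs_neg, abs_of_nonneg hε.le]; ring
    · rw [show (1:ℝ)/d - (1/d + 0 - ε) = ε by ring, abs_of_nonneg hε.le]; ring
    · rw [show (1:ℝ)/d - (1/d + 0 - 0) = 0 by ring, abs_zero]; ring
  simp_rw [h]
  rw [Finset.sum_add_distrib, Finset.sum_ite_eq' Finset.univ i1 (fun _ => ε),
    Finset.sum_ite_eq' Finset.univ i0 (fun _ => ε)]
  simp only [Finset.mem_univ, if_true]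
  ring

lemma qfun_sup {d : ℕ} (hne : (Finset.univ : Finset (Fin d)).Nonempty)
    (i0 i1 : Fin d) (hi : i1 ≠ i0) {ε : ℝ} (hε : 0 < ε) :
    Finset.univ.sup' hne (qfun d i0 i1 ε) = 1/d + ε := by
  apply le_antisymm
  · apply Finset.sup'_le
    intro i _
    unfold qfun; split_ifs <;> linarith
  · have h : qfun d i0 i1 ε i1 = 1/d + ε := by
      unfold qfun; rw [if_pos rfl, if_neg hi]; ring
    calc (1:ℝ)/d + ε = qfun d i0 i1 ε i1 := h.symm
      _ ≤ _ := Finset.le_sup' _ (Finset.mem_univ i1)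

/-- The min-entropy `H_∞(p) = -log₂ (max_i p_i)` is Lipschitz w.r.t. total variation
distance, with optimal Lipschitz constant `d / ln 2`. -/
theorem stmt7 {d : ℕ} (hd : 2 ≤ d)
    (Hinf : (Fin d → ℝ) → ℝ)
    (hHinf : ∀ p, Hinf p =
      -Real.logb 2 (Finset.univ.sup' (Finset.univ_nonempty_iff.mpr ⟨⟨0, by omega⟩⟩) p)) :
    (∀ p q : Fin d → ℝ,
        ((∀ i, 0 ≤ p i) ∧ ∑ i, p i = 1) → ((∀ i, 0 ≤ q i) ∧ ∑ i, q i = 1) →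
        |Hinf p - Hinf q| ≤ ((d : ℝ) / Real.log 2) * ((1 / 2) * ∑ i, |p i - q i|)) ∧
      (∀ k : ℝ,
        (∀ p q : Fin d → ℝ,
          ((∀ i, 0 ≤ p i) ∧ ∑ i, p i = 1) → ((∀ i, 0 ≤ q i) ∧ ∑ i, q i = 1) →
          |Hinf p - Hinf q| ≤ k * ((1 / 2) * ∑ i, |p i - q i|)) →
        (d : ℝ) / Real.log 2 ≤ k) := by
  have hne : (Finset.univ : Finset (Fin d)).Nonempty :=
    Finset.univ_nonempty_iff.mpr ⟨⟨0, by omega⟩⟩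
  have hlog2 : 0 < Real.log 2 := Real.log_pos one_lt_two
  constructor
  · rintro p q ⟨hp0, hp1⟩ ⟨hq0, hq1⟩
    have hsym : ∑ i, |q i - p i| = ∑ i, |p i - q i| := by
      simp_rw [abs_sub_comm]
    have h1 := key hne p q hp0 hp1 hq0 hq1
    have h2 := key hne q p hq0 hq1 hp0 hp1
    rw [hsym] at h2
    rw [hHinf p, hHinf q]
    have heq : -Real.logb 2 (Finset.univ.sup' hne p) - -Real.logb 2 (Finset.univ.sup' hne q)
        = (Real.log (Finset.univ.sup' hne q) - Real.log (Finset.univ.sup' hne p)) / Real.log 2 := by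
      rw [Real.logb, Real.logb]; ring
    rw [heq, abs_div, abs_of_pos hlog2, div_mul_eq_mul_div,
      div_le_div_iff₀ hlog2 hlog2]
    have habs : |Real.log (Finset.univ.sup' hne q) - Real.log (Finset.univ.sup' hne p)|
        ≤ ↑d * ((1/2) * ∑ i, |p i - q i|) := abs_sub_le_iff.mpr ⟨h1, h2⟩
    exact mul_le_mul_of_nonneg_right habs hlog2.le
  · intro k hk
    have hd0 : (0:ℝ) < d := by positivity
    have hi01 : (⟨1, by omega⟩ : Fin d) ≠ ⟨0, by omega⟩ := by
      simp [Fin.ext_iff]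
    have main : ∀ ε : ℝ, 0 < ε → ε ≤ 1/d → (d:ℝ) / ((1 + d*ε) * Real.log 2) ≤ k := by
      intro ε hε hεd
      set q : Fin d → ℝ := qfun d ⟨0, by omega⟩ ⟨1, by omega⟩ ε with hqdef
      have hsum_p : ∑ _i : Fin d, (1:ℝ)/d = 1 := by
        rw [Finset.sum_const, Finset.card_univ, Fintype.card_fin, nsmul_eq_mul]
        field_simp
      have hbound := hk (fun _ => 1/d) q ⟨fun i => by positivity, hsum_p⟩
        ⟨qfun_nonneg hd0 _ _ hε hεd, qfun_sum hd0 _ _ ε⟩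
      have hsup_p : Finset.univ.sup' hne (fun _ : Fin d => (1:ℝ)/d) = 1/d :=
        Finset.sup'_const hne _
      rw [hHinf, hHinf, hsup_p, hqdef, qfun_sup hne _ _ hi01 hε] at hbound
      have habs : ∑ i, |(fun _ : Fin d => (1:ℝ)/d) i - q i| = 2*ε :=
        qfun_absdiff _ _ hi01 hε
      rw [habs] at hbound
      have h7 : Real.logb 2 (1/d+ε) - Real.logb 2 (1/d) ≤ k * ε := by
        have h := le_trans (le_abs_self (-Real.logb 2 ((1:ℝ)/d) - -Real.logb 2 (1/d+ε))) hbound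
        have he : k * ((1/2) * (2*ε)) = k * ε := by ring
        linarith
      have h8 : Real.logb 2 (1/d+ε) - Real.logb 2 (1/d) = Real.log (1+d*ε)/Real.log 2 := by
        rw [Real.logb, Real.logb, div_sub_div_same,
          ← Real.log_div (by positivity) (by positivity)]
        congr 2
        field_simp
      have h9 : d*ε/(1+d*ε) ≤ Real.log (1+d*ε) := by
        have h := Real.log_le_sub_one_of_pos (x := (1+d*ε)⁻¹) (by positivity)
        rw [Real.log_inv] at h
        have he : (1:ℝ) - (1+d*ε)⁻¹ = d*ε/(1+d*ε) := by field_simp; ring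
        linarith
      have hA : (0:ℝ) < (1 + d*ε) * Real.log 2 := by positivity
      rw [div_le_iff₀ hA]
      have h10 : d*ε/((1+d*ε) * Real.log 2) ≤ k * ε := by
        rw [← div_div]
        calc d*ε/(1+d*ε)/Real.log 2 ≤ Real.log (1+d*ε)/Real.log 2 := by gcongr
          _ ≤ k * ε := by rw [← h8]; exact h7
      have h11 : (d:ℝ)*ε ≤ k*ε*((1+d*ε) * Real.log 2) := (div_le_iff₀ hA).mp h10
      nlinarith
    by_contra hcon
    push_neg at hcon
    have hk0 : 0 < k := by
      have h := main (1/d) (by positivity) le_rfl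
      have he : (1:ℝ) + d*(1/d) = 2 := by field_simp; norm_num
      rw [he] at h
      have : (0:ℝ) < d / (2 * Real.log 2) := by positivity
      linarith
    have hklt : k * Real.log 2 < d := (lt_div_iff₀ hlog2).mp hcon
    have hdk : (1:ℝ) < d/(k*Real.log 2) := by
      rw [lt_div_iff₀ (by positivity)]
      linarith
    obtain ⟨ε, hε0, hεle, hεδ⟩ :
        ∃ ε : ℝ, 0 < ε ∧ ε ≤ 1/d ∧ 1 + (d:ℝ)*ε < d/(k*Real.log 2) := by
      refine ⟨min (1/d) ((d/(k*Real.log 2) - 1)/(2*d)),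
        lt_min (by positivity) (div_pos (by linarith) (by positivity)), min_le_left _ _, ?_⟩
      have h1 : min ((1:ℝ)/d) ((d/(k*Real.log 2) - 1)/(2*d)) ≤ (d/(k*Real.log 2) - 1)/(2*d) :=
        min_le_right _ _
      have h2 : (d:ℝ) * min ((1:ℝ)/d) ((d/(k*Real.log 2) - 1)/(2*d))
          ≤ d * ((d/(k*Real.log 2) - 1)/(2*d)) := by
        exact mul_le_mul_of_nonneg_left h1 hd0.le
      have h3 : (d:ℝ) * ((d/(k*Real.log 2) - 1)/(2*d)) = (d/(k*Real.log 2) - 1)/2 := by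
        field_simp
      linarith
    have h := main ε hε0 hεle
    have hB : (0:ℝ) < (1+d*ε)*Real.log 2 := by positivity
    have h4 : (d:ℝ) ≤ k*((1+d*ε)*Real.log 2) := (div_le_iff₀ hB).mp h
    have h5 : (1+d*ε)*Real.log 2 < (d/(k*Real.log 2))*Real.log 2 :=
      mul_lt_mul_of_pos_right hεδ hlog2
    have h6 : ((d:ℝ)/(k*Real.log 2))*Real.log 2 = d/k := by
      field_simp
    have h7 : k*((1+d*ε)*Real.log 2) < k*((d:ℝ)/k) := by
      rw [← h6]
      exact mul_lt_mul_of_pos_left h5 hk0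
    have h8 : k*((d:ℝ)/k) = d := by field_simp
    linarith
end

section
/- The α-Rényi entropy H_α on the probability simplex in ℝ^d (d ≥ 2) is not Lipschitz continuous with respect to total variation distance when 0 < α ≤ 1: for every constant k there exist probability vectors p, q with |H_α(p) − H_α(q)| > k·TV(p,q). -/
open Finset Real

lemma sum_two_aux {d : ℕ} (a b : Fin d) (hab : a ≠ b) (x y : ℝ) :
    ∑ i, (if i = a then x else if i = b then y else 0) = x + y := by
  have h : ∀ i : Fin d, (if i = a then x else if i = b then y else 0)
      = (if i = a then x else 0) + (if i = b then y else 0) := by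
    intro i
    by_cases h1 : i = a
    · subst h1; simp [hab]
    · by_cases h2 : i = b
      · subst h2; simp [h1]
      · simp [h1, h2]
  simp only [h, Finset.sum_add_distrib, Finset.sum_ite_eq', Finset.mem_univ, if_true]

/-- For `0 < α ≤ 1` the α-Rényi entropy (Shannon entropy at `α = 1`) is not
Lipschitz continuous w.r.t. total variation distance. -/
theorem stmt9 {d : ℕ} (hd : 2 ≤ d) (α : ℝ) (hα0 : 0 < α) (hα1 : α ≤ 1)
    (H : (Fin d → ℝ) → ℝ)
    (hH : ∀ p, H p = if α = 1 then -∑ i, p i * Real.logb 2 (p i)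
      else (1 / (1 - α)) * Real.logb 2 (∑ i, p i ^ α)) :
    ∀ k : ℝ, ∃ p q : Fin d → ℝ,
      ((∀ i, 0 ≤ p i) ∧ ∑ i, p i = 1) ∧ ((∀ i, 0 ≤ q i) ∧ ∑ i, q i = 1) ∧
      k * ((1 / 2) * ∑ i, |p i - q i|) < |H p - H q| := by
  intro k
  set m : ℕ := ⌈2 * k⌉₊ + 1 with hm
  have hm1 : 1 ≤ m := Nat.le_add_left 1 _
  have hmk : 2 * k < (m : ℝ) := by
    calc 2 * k ≤ (⌈2 * k⌉₊ : ℝ) := Nat.le_ceil _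
    _ < (m : ℝ) := by push_cast [hm]; linarith
  set ε : ℝ := (1 / 2) ^ m with hε
  have hε0 : 0 < ε := by positivity
  have hεhalf : ε ≤ 1 / 2 := by
    calc ε ≤ (1 / 2 : ℝ) ^ 1 := by
          apply pow_le_pow_of_le_one (by norm_num) (by norm_num) hm1
    _ = 1 / 2 := pow_one _
  have hε1 : ε < 1 := lt_of_le_of_lt hεhalf (by norm_num)
  have h1ε : 0 < 1 - ε := by linarith
  have hlog2ne : Real.log 2 ≠ 0 := ne_of_gt (Real.log_pos (by norm_num))
  have hlogε : Real.logb 2 ε = -(m : ℝ) := by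
    have hle : Real.log ε = -((m : ℝ) * Real.log 2) := by
      rw [hε, one_div, inv_pow, Real.log_inv, Real.log_pow]
    rw [Real.logb, hle, neg_div, mul_div_assoc, div_self hlog2ne, mul_one]
  -- indices
  have h0d : 0 < d := by omega
  have h1d : 1 < d := by omega
  set a : Fin d := ⟨0, h0d⟩ with ha
  set b : Fin d := ⟨1, h1d⟩ with hb
  have hab : a ≠ b := by simp [ha, hb, Fin.ext_iff]
  -- the distributions
  set p : Fin d → ℝ := fun i => if i = a then 1 - ε else if i = b then ε else 0 with hp
  set q : Fin d → ℝ := fun i => if i = a then 1 else if i = b then 0 else 0 with hq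
  have hpsum : ∑ i, p i = 1 := by
    rw [hp, sum_two_aux a b hab]; ring
  have hqsum : ∑ i, q i = 1 := by
    rw [hq, sum_two_aux a b hab]; ring
  have hpnn : ∀ i, 0 ≤ p i := by
    intro i; rw [hp]; dsimp only
    split_ifs <;> linarith
  have hqnn : ∀ i, 0 ≤ q i := by
    intro i; rw [hq]; dsimp only
    split_ifs <;> norm_num
  have htv : ∑ i, |p i - q i| = 2 * ε := by
    have : ∀ i : Fin d, |p i - q i| = (if i = a then ε else if i = b then ε else 0) := by
      intro i; rw [hp, hq]; dsimp only
      by_cases h1 : i = a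
      · simp [h1, abs_of_nonpos, hε0.le]
      · by_cases h2 : i = b <;> simp [h1, h2, Ne.symm hab, abs_of_nonneg hε0.le]
    rw [Finset.sum_congr rfl (fun i _ => this i), sum_two_aux a b hab]; ring
  refine ⟨p, q, ⟨hpnn, hpsum⟩, ⟨hqnn, hqsum⟩, ?_⟩
  rw [htv]
  have hLHS : k * (1 / 2 * (2 * ε)) = k * ε := by ring
  rw [hLHS]
  by_cases hα : α = 1
  · -- Shannon case
    have hHp : H p = -((1 - ε) * Real.logb 2 (1 - ε) + ε * Real.logb 2 ε) := by
      rw [hH p, if_pos hα]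
      congr 1
      have : ∀ i : Fin d, p i * Real.logb 2 (p i)
          = (if i = a then (1 - ε) * Real.logb 2 (1 - ε) else if i = b then ε * Real.logb 2 ε else 0) := by
        intro i; rw [hp]; dsimp only
        by_cases h1 : i = a
        · simp [h1]
        · by_cases h2 : i = b <;> simp [h1, h2, Ne.symm hab]
      rw [Finset.sum_congr rfl (fun i _ => this i), sum_two_aux a b hab]
    have hHq : H q = 0 := by
      rw [hH q, if_pos hα]
      have : ∀ i : Fin d, q i * Real.logb 2 (q i) = 0 := by
        intro i; rw [hq]; dsimp only
        by_cases h1 : i = a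
        · simp [h1]
        · by_cases h2 : i = b <;> simp [h1, h2, Ne.symm hab]
      simp [this]
    have hlog1ε : Real.logb 2 (1 - ε) ≤ 0 :=
      Real.logb_nonpos (by norm_num) h1ε.le (by linarith)
    have hHp_ge : (m : ℝ) * ε ≤ H p := by
      rw [hHp, hlogε]
      nlinarith [mul_nonneg h1ε.le (neg_nonneg.2 hlog1ε)]
    have hkm : k < (m : ℝ) := by
      rcases le_or_gt k 0 with h | h
      · have : (0:ℝ) < m := by exact_mod_cast hm1
        linarith
      · linarith
    calc k * ε < (m : ℝ) * ε := by
          exact mul_lt_mul_of_pos_right hkm hε0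
    _ ≤ H p := hHp_ge
    _ ≤ |H p| := le_abs_self _
    _ = |H p - H q| := by rw [hHq, sub_zero]
  · -- Rényi case, α < 1
    have hα1' : α < 1 := lt_of_le_of_ne hα1 hα
    have h1α : 0 < 1 - α := by linarith
    have hHq : H q = 0 := by
      rw [hH q, if_neg hα]
      have : ∀ i : Fin d, q i ^ α = (if i = a then 1 else if i = b then 0 else 0) := by
        intro i; rw [hq]; dsimp only
        by_cases h1 : i = a
        · simp [h1, Real.one_rpow]
        · by_cases h2 : i = b <;> simp [h1, h2, Ne.symm hab, Real.zero_rpow hα0.ne']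
      rw [Finset.sum_congr rfl (fun i _ => this i), sum_two_aux a b hab]
      norm_num
    set S : ℝ := (1 - ε) ^ α + ε ^ α with hS
    have hHp : H p = (1 / (1 - α)) * Real.logb 2 S := by
      rw [hH p, if_neg hα]
      congr 2
      have : ∀ i : Fin d, p i ^ α = (if i = a then (1 - ε) ^ α else if i = b then ε ^ α else 0) := by
        intro i; rw [hp]; dsimp only
        by_cases h1 : i = a
        · simp [h1]
        · by_cases h2 : i = b <;> simp [h1, h2, Ne.symm hab, Real.zero_rpow hα0.ne']
      rw [Finset.sum_congr rfl (fun i _ => this i), sum_two_aux a b hab]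
    -- basic bounds
    have hεα_le_one : ε ^ α ≤ 1 := Real.rpow_le_one hε0.le hε1.le hα0.le
    have h1εα_ge : 1 - ε ≤ (1 - ε) ^ α := by
      have := Real.rpow_le_rpow_of_exponent_ge h1ε (by linarith) hα1
      rwa [Real.rpow_one] at this
    have hεα_ge : ε ≤ ε ^ α := by
      have := Real.rpow_le_rpow_of_exponent_ge hε0 (le_of_lt hε1) hα1
      rwa [Real.rpow_one] at this
    set t : ℝ := ε ^ α - ε with ht
    have ht0 : 0 ≤ t := by linarith
    have ht1 : t ≤ 1 := by linarith
    have hS_ge : 1 + t ≤ S := by rw [hS, ht]; linarith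
    -- log lower bound : log (1 + t) ≥ t / 2
    have hlog_ge : t / 2 ≤ Real.log (1 + t) := by
      have hpos : (0:ℝ) < 1 + t := by linarith
      have h := Real.log_le_sub_one_of_pos (show (0:ℝ) < (1 + t)⁻¹ by positivity)
      rw [Real.log_inv] at h
      have : 1 - (1 + t)⁻¹ ≤ Real.log (1 + t) := by linarith
      have h2 : t / 2 ≤ 1 - (1 + t)⁻¹ := by
        have he : 1 - (1 + t)⁻¹ = t / (1 + t) := by field_simp; ring
        rw [he, div_le_div_iff₀ (by norm_num) hpos]
        nlinarith
      linarith
    have hlogS : t / 2 ≤ Real.log S := by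
      calc t / 2 ≤ Real.log (1 + t) := hlog_ge
      _ ≤ Real.log S := Real.log_le_log (by linarith) hS_ge
    -- lower bound on t : t ≥ ε * m * (1 - α) * log 2
    have hlog2 : (0:ℝ) < Real.log 2 := Real.log_pos (by norm_num)
    have h_t_ge : ε * ((m : ℝ) * (1 - α) * Real.log 2) ≤ t := by
      have hεα : ε ^ α = ε * ε ^ (α - 1) := by
        nth_rewrite 2 [← Real.rpow_one ε]
        rw [← Real.rpow_add hε0]
        norm_num
      have hε2 : ε = (2:ℝ) ^ (-(m:ℝ)) := by
        rw [hε, one_div, Real.rpow_neg (by norm_num), Real.rpow_natCast, inv_pow]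
      have hexp : ε ^ (α - 1) = Real.exp ((m : ℝ) * (1 - α) * Real.log 2) := by
        rw [hε2, ← Real.rpow_mul (by norm_num : (0:ℝ) ≤ 2),
          Real.rpow_def_of_pos (by norm_num : (0:ℝ) < 2)]
        congr 1
        ring
      have hbd : 1 + (m : ℝ) * (1 - α) * Real.log 2 ≤ ε ^ (α - 1) := by
        rw [hexp]
        linarith [Real.add_one_le_exp ((m : ℝ) * (1 - α) * Real.log 2)]
      have : t = ε * (ε ^ (α - 1) - 1) := by rw [ht, hεα]; ring
      rw [this]
      have := mul_le_mul_of_nonneg_left (by linarith : (m : ℝ) * (1 - α) * Real.log 2 ≤ ε ^ (α - 1) - 1) hε0.le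
      linarith
    -- conclude
    have hA : ε * (m : ℝ) * (1 - α) / 2 ≤ Real.log S / Real.log 2 := by
      rw [le_div_iff₀ hlog2]
      calc ε * (m : ℝ) * (1 - α) / 2 * Real.log 2
          = (ε * ((m : ℝ) * (1 - α) * Real.log 2)) / 2 := by ring
        _ ≤ t / 2 := by linarith
        _ ≤ Real.log S := hlogS
    have hHp_ge : ε * (m : ℝ) / 2 ≤ H p := by
      rw [hHp, Real.logb]
      have h1 := mul_le_mul_of_nonneg_left hA (le_of_lt (by positivity : (0:ℝ) < 1 / (1 - α)))
      have h2 : (1 / (1 - α)) * (ε * (m : ℝ) * (1 - α) / 2) = ε * (m : ℝ) / 2 := by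
        field_simp
      linarith
    have hk2 : k < (m : ℝ) / 2 := by linarith
    calc k * ε < (m : ℝ) / 2 * ε := mul_lt_mul_of_pos_right hk2 hε0
    _ = ε * (m : ℝ) / 2 := by ring
    _ ≤ H p := hHp_ge
    _ ≤ |H p| := le_abs_self _
    _ = |H p - H q| := by rw [hHq, sub_zero]
end

section
/- For 0 < α < 1, ε ∈ [0, 1 − 1/d], and probability vectors p, q in ℝ^d with TV(p,q) ≤ ε, the α-Rényi entropies satisfy |H_α(p) − H_α(q)| ≤ (1/(1−α))·log₂((1−ε)^α + (d−1)^{1−α}·ε^α). -/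
open Finset Real

private lemma rpow_two_add_le {α : ℝ} (hα0 : 0 < α) (hα1 : α ≤ 1) {x y : ℝ}
    (hx : 0 ≤ x) (hy : 0 ≤ y) : (x + y) ^ α ≤ x ^ α + y ^ α := by
  have h := NNReal.rpow_add_le_add_rpow (Real.toNNReal x) (Real.toNNReal y) hα0.le hα1
  have h2 := NNReal.coe_le_coe.2 h
  push_cast [NNReal.coe_rpow] at h2
  rwa [Real.coe_toNNReal x hx, Real.coe_toNNReal y hy] at h2

private lemma rpow_sum_le {α : ℝ} (hα0 : 0 < α) (hα1 : α ≤ 1) {ι : Type*} (s : Finset ι)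
    (f : ι → ℝ) (hf : ∀ i ∈ s, 0 ≤ f i) : (∑ i ∈ s, f i) ^ α ≤ ∑ i ∈ s, f i ^ α := by
  induction s using Finset.cons_induction with
  | empty => simp [Real.zero_rpow hα0.ne']
  | cons i s hi ih =>
    rw [Finset.sum_cons, Finset.sum_cons]
    calc (f i + ∑ j ∈ s, f j) ^ α ≤ f i ^ α + (∑ j ∈ s, f j) ^ α :=
          rpow_two_add_le hα0 hα1 (hf i (Finset.mem_cons_self i s))
            (Finset.sum_nonneg fun j hj => hf j (Finset.mem_cons_of_mem hj))
      _ ≤ f i ^ α + ∑ j ∈ s, f j ^ α := by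
          have := ih (fun j hj => hf j (Finset.mem_cons_of_mem hj))
          linarith

private lemma sum_rpow_le_jensen {α : ℝ} (hα0 : 0 < α) (hα1 : α < 1) {ι : Type*}
    (s : Finset ι) (hs : s.Nonempty) (f : ι → ℝ) (hf : ∀ i ∈ s, 0 ≤ f i) :
    ∑ i ∈ s, f i ^ α ≤ (s.card : ℝ) ^ (1 - α) * (∑ i ∈ s, f i) ^ α := by
  have hc : (0 : ℝ) < (s.card : ℝ) := by
    exact_mod_cast Nat.pos_of_ne_zero (fun h => by simp [Finset.card_eq_zero.mp h] at hs)
  have hconc := (Real.strictConcaveOn_rpow hα0 hα1).concaveOn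
  have hw : ∑ _i ∈ s, (1 / (s.card : ℝ)) = 1 := by
    rw [Finset.sum_const, nsmul_eq_mul]
    field_simp
  have hj := hconc.le_map_sum (t := s) (w := fun _ => 1 / (s.card : ℝ)) (p := f)
    (fun i _ => by positivity) hw (fun i hi => Set.mem_Ici.2 (hf i hi))
  simp only [smul_eq_mul] at hj
  have hS : 0 ≤ ∑ i ∈ s, f i := Finset.sum_nonneg hf
  have h1 : ∑ i ∈ s, (1 / (s.card : ℝ)) * f i = (∑ i ∈ s, f i) / (s.card : ℝ) := by
    rw [← Finset.mul_sum]; ring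
  rw [h1] at hj
  have h2 : ∑ i ∈ s, (1 / (s.card : ℝ)) * f i ^ α = (∑ i ∈ s, f i ^ α) / (s.card : ℝ) := by
    rw [← Finset.mul_sum]; ring
  rw [h2] at hj
  have h3 : ((∑ i ∈ s, f i) / (s.card : ℝ)) ^ α = (∑ i ∈ s, f i) ^ α / (s.card : ℝ) ^ α :=
    Real.div_rpow hS hc.le α
  rw [h3] at hj
  have h4 : (s.card : ℝ) ^ (1 - α) = (s.card : ℝ) / (s.card : ℝ) ^ α := by
    rw [Real.rpow_sub hc, Real.rpow_one]
  have hcα : (0 : ℝ) < (s.card : ℝ) ^ α := Real.rpow_pos_of_pos hc α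
  rw [div_le_iff₀ hc] at hj
  rw [h4]
  calc ∑ i ∈ s, f i ^ α ≤ (∑ i ∈ s, f i) ^ α / (s.card : ℝ) ^ α * (s.card : ℝ) := hj
    _ = (s.card : ℝ) / (s.card : ℝ) ^ α * (∑ i ∈ s, f i) ^ α := by ring

private lemma rpow_split {α : ℝ} (hα0 : 0 < α) (hα1 : α < 1) {ε x y : ℝ}
    (hε0 : 0 < ε) (hε1 : ε < 1) (hx : 0 ≤ x) (hy : 0 ≤ y) :
    (1 - ε) ^ (1 - α) * x ^ α + ε ^ (1 - α) * y ^ α ≤ (x + y) ^ α := by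
  have h1ε : (0 : ℝ) < 1 - ε := by linarith
  have hconc := (Real.strictConcaveOn_rpow hα0 hα1).concaveOn
  have h := hconc.2 (Set.mem_Ici.2 (by positivity : (0:ℝ) ≤ x / (1 - ε)))
    (Set.mem_Ici.2 (by positivity : (0:ℝ) ≤ y / ε)) h1ε.le hε0.le (by ring)
  simp only [smul_eq_mul] at h
  have e1 : (1 - ε) * (x / (1 - ε)) + ε * (y / ε) = x + y := by field_simp
  rw [e1] at h
  have e2 : (x / (1 - ε)) ^ α = x ^ α / (1 - ε) ^ α := Real.div_rpow hx h1ε.le α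
  have e3 : (y / ε) ^ α = y ^ α / ε ^ α := Real.div_rpow hy hε0.le α
  rw [e2, e3] at h
  have e4 : (1 - ε) ^ (1 - α) = (1 - ε) / (1 - ε) ^ α := by
    rw [Real.rpow_sub h1ε, Real.rpow_one]
  have e5 : ε ^ (1 - α) = ε / ε ^ α := by rw [Real.rpow_sub hε0, Real.rpow_one]
  rw [e4, e5]
  calc (1 - ε) / (1 - ε) ^ α * x ^ α + ε / ε ^ α * y ^ α
      = (1 - ε) * (x ^ α / (1 - ε) ^ α) + ε * (y ^ α / ε ^ α) := by ring
    _ ≤ (x + y) ^ α := h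

set_option maxHeartbeats 1000000 in
private lemma key_ratio {d : ℕ} (hd : 2 ≤ d) {α : ℝ} (hα0 : 0 < α) (hα1 : α < 1)
    {ε : ℝ} (hε0 : 0 < ε) (hε1 : ε ≤ 1 - 1 / d)
    (p q : Fin d → ℝ) (hp : ∀ i, 0 ≤ p i) (hp1 : ∑ i, p i = 1)
    (hq : ∀ i, 0 ≤ q i) (hq1 : ∑ i, q i = 1)
    (hTV : (1 / 2) * ∑ i, |p i - q i| ≤ ε) :
    ∑ i, p i ^ α ≤ ((1 - ε) ^ α + ((d : ℝ) - 1) ^ (1 - α) * ε ^ α) * ∑ i, q i ^ α := by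
  have hd1 : (1 : ℝ) ≤ (d : ℝ) - 1 := by
    have : (2 : ℝ) ≤ (d : ℝ) := by exact_mod_cast hd
    linarith
  have hdpos : (0 : ℝ) < (d : ℝ) := by linarith
  have h1ε : (0 : ℝ) < 1 - ε := by
    have : 1 / (d : ℝ) > 0 := by positivity
    linarith
  have hεlt1 : ε < 1 := by linarith
  set n : ℝ := (d : ℝ) - 1 with hn
  -- decomposition
  set m : Fin d → ℝ := fun i => min (p i) (q i) with hm
  set a : Fin d → ℝ := fun i => p i - m i with hadef
  set b : Fin d → ℝ := fun i => q i - m i with hbdef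
  have ham : ∀ i, 0 ≤ a i := fun i => by simp [hadef, hm, min_le_left]
  have hbm : ∀ i, 0 ≤ b i := fun i => by simp [hbdef, hm, min_le_right]
  have hmnn : ∀ i, 0 ≤ m i := fun i => le_min (hp i) (hq i)
  have habs : ∀ i, a i + b i = |p i - q i| := by
    intro i
    rcases le_total (p i) (q i) with h | h
    · rw [abs_of_nonpos (by linarith : p i - q i ≤ 0)]
      simp only [hadef, hbdef, hm, min_eq_left h]
      ring
    · rw [abs_of_nonneg (by linarith : 0 ≤ p i - q i)]
      simp only [hadef, hbdef, hm, min_eq_right h]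
      ring
  set t : ℝ := ∑ i, a i with htdef
  have ht0 : 0 ≤ t := Finset.sum_nonneg fun i _ => ham i
  have hsb : ∑ i, b i = t := by
    have h1 : ∑ i, b i - ∑ i, a i = 0 := by
      rw [← Finset.sum_sub_distrib]
      have he : ∀ i ∈ Finset.univ, b i - a i = q i - p i := fun i _ => by
        simp only [hadef, hbdef]; ring
      rw [Finset.sum_congr rfl he, Finset.sum_sub_distrib, hp1, hq1]
      ring
    rw [htdef]
    linarith
  have htε : t ≤ ε := by
    have h1 : ∑ i, (a i + b i) = ∑ i, |p i - q i| := Finset.sum_congr rfl fun i _ => habs i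
    rw [Finset.sum_add_distrib, hsb, ← htdef] at h1
    linarith
  have hsm : ∑ i, m i = 1 - t := by
    have h1 : ∑ i, m i + ∑ i, a i = 1 := by
      rw [← Finset.sum_add_distrib]
      have he : ∀ i ∈ Finset.univ, m i + a i = p i := fun i _ => by
        simp only [hadef]; ring
      rw [Finset.sum_congr rfl he, hp1]
    rw [htdef]
    linarith
  -- exists an index where a vanishes
  have hi0 : ∃ i₀ : Fin d, a i₀ = 0 := by
    rcases eq_or_lt_of_le ht0 with h | h
    · exact ⟨⟨0, by omega⟩, by
        have := (Finset.sum_eq_zero_iff_of_nonneg (fun i _ => ham i)).mp h.symm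
        exact this _ (Finset.mem_univ _)⟩
    · have : ∃ i, 0 < b i := by
        by_contra hcon
        push_neg at hcon
        have : ∑ i, b i ≤ 0 := Finset.sum_nonpos fun i _ => hcon i
        rw [hsb] at this; linarith
      obtain ⟨i, hib⟩ := this
      refine ⟨i, ?_⟩
      have hmp : m i = p i := by
        rcases le_total (p i) (q i) with h' | h'
        · simp [hm, min_eq_left h']
        · exfalso
          have hbq : b i = q i - m i := by simp [hbdef]
          rw [hbq] at hib
          simp only [hm] at hib
          rw [min_eq_right h'] at hib
          linarith
      simp [hadef, hmp]
  obtain ⟨i₀, hi₀⟩ := hi0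
  set M : ℝ := ∑ i, m i ^ α with hM
  -- Step A : ∑ p^α ≤ M + n^(1-α) t^α
  have hcard : ((Finset.univ.erase i₀).card : ℝ) = n := by
    rw [Finset.card_erase_of_mem (Finset.mem_univ i₀), Finset.card_univ, Fintype.card_fin,
      Nat.cast_sub (by omega : 1 ≤ d), Nat.cast_one, hn]
  have hSa : ∑ i ∈ Finset.univ.erase i₀, a i = t := by
    rw [htdef, ← Finset.add_sum_erase _ _ (Finset.mem_univ i₀), hi₀, zero_add]
  have hA : ∑ i, p i ^ α ≤ M + n ^ (1 - α) * t ^ α := by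
    have hpt : ∀ i, p i ^ α ≤ m i ^ α + a i ^ α := by
      intro i
      have : p i = m i + a i := by simp [hadef]
      rw [this]
      exact rpow_two_add_le hα0 hα1.le (hmnn i) (ham i)
    have h1 : ∑ i, p i ^ α ≤ ∑ i, (m i ^ α + a i ^ α) :=
      Finset.sum_le_sum fun i _ => hpt i
    rw [Finset.sum_add_distrib] at h1
    have h2 : ∑ i, a i ^ α = ∑ i ∈ Finset.univ.erase i₀, a i ^ α := by
      rw [← Finset.add_sum_erase _ _ (Finset.mem_univ i₀), hi₀,
        Real.zero_rpow hα0.ne', zero_add]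
    have hne : (Finset.univ.erase i₀).Nonempty := by
      rw [← Finset.card_pos]
      have : (Finset.univ.erase i₀).card = d - 1 := by
        rw [Finset.card_erase_of_mem (Finset.mem_univ i₀)]; simp
      omega
    have h3 := sum_rpow_le_jensen hα0 hα1 (Finset.univ.erase i₀) hne a
      (fun i _ => ham i)
    rw [hcard, hSa] at h3
    rw [h2] at h1
    calc ∑ i, p i ^ α ≤ M + ∑ i ∈ Finset.univ.erase i₀, a i ^ α := h1
      _ ≤ M + n ^ (1 - α) * t ^ α := by linarith
  -- Step B : (1-ε)^(1-α) M + ε^(1-α) t^α ≤ ∑ q^α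
  have hB : (1 - ε) ^ (1 - α) * M + ε ^ (1 - α) * t ^ α ≤ ∑ i, q i ^ α := by
    have hpt : ∀ i, (1 - ε) ^ (1 - α) * m i ^ α + ε ^ (1 - α) * b i ^ α ≤ q i ^ α := by
      intro i
      have : q i = m i + b i := by simp [hbdef]
      rw [this]
      exact rpow_split hα0 hα1 hε0 hεlt1 (hmnn i) (hbm i)
    have h1 : ∑ i, ((1 - ε) ^ (1 - α) * m i ^ α + ε ^ (1 - α) * b i ^ α) ≤ ∑ i, q i ^ α :=
      Finset.sum_le_sum fun i _ => hpt i
    rw [Finset.sum_add_distrib, ← Finset.mul_sum, ← Finset.mul_sum] at h1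
    have h2 : t ^ α ≤ ∑ i, b i ^ α := by
      have := rpow_sum_le hα0 hα1.le Finset.univ b (fun i _ => hbm i)
      rwa [hsb] at this
    have h3 : ε ^ (1 - α) * t ^ α ≤ ε ^ (1 - α) * ∑ i, b i ^ α :=
      mul_le_mul_of_nonneg_left h2 (Real.rpow_nonneg hε0.le _)
    linarith
  -- bounds on M and t^α
  have hMlb : (1 - ε) ^ α ≤ M := by
    have h1 : (1 - t) ^ α ≤ M := by
      have := rpow_sum_le hα0 hα1.le Finset.univ m (fun i _ => hmnn i)
      rwa [hsm] at this
    have h2 : (1 - ε) ^ α ≤ (1 - t) ^ α :=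
      Real.rpow_le_rpow h1ε.le (by linarith) hα0.le
    linarith
  have hTub : t ^ α ≤ ε ^ α := Real.rpow_le_rpow ht0 htε hα0.le
  -- key numeric inequality
  set x : ℝ := (1 - ε) ^ α with hx
  set y : ℝ := (1 - ε) ^ (1 - α) with hy
  set u : ℝ := ε ^ α with hu
  set v : ℝ := ε ^ (1 - α) with hv
  set E : ℝ := n ^ (1 - α) with hE
  set T : ℝ := t ^ α with hT
  have hxpos : 0 < x := Real.rpow_pos_of_pos h1ε α
  have hypos : 0 < y := Real.rpow_pos_of_pos h1ε (1 - α)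
  have hupos : 0 < u := Real.rpow_pos_of_pos hε0 α
  have hvpos : 0 < v := Real.rpow_pos_of_pos hε0 (1 - α)
  have hEpos : 0 < E := Real.rpow_pos_of_pos (by linarith : (0:ℝ) < n) (1 - α)
  have hTnn : 0 ≤ T := Real.rpow_nonneg ht0 α
  have hxy : x * y = 1 - ε := by
    rw [hx, hy, ← Real.rpow_add h1ε]; norm_num
  have huv : u * v = ε := by
    rw [hu, hv, ← Real.rpow_add hε0]; norm_num
  have hεn : ε ≤ n * (1 - ε) := by
    have h2 : ε * d ≤ (1 - 1/(d:ℝ)) * d := mul_le_mul_of_nonneg_right hε1 hdpos.le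
    have h3 : (1 - 1/(d:ℝ)) * d = (d:ℝ) - 1 := by field_simp
    rw [hn]
    nlinarith
  have hW : v ≤ E * y := by
    rw [hv, hE, hy, ← Real.mul_rpow (by linarith : (0:ℝ) ≤ n) h1ε.le]
    exact Real.rpow_le_rpow hε0.le hεn (by linarith)
  -- polynomial identity and conclusion
  have hrel : x * y + u * v = 1 := by rw [hxy, huv]; ring
  have hkey : M + E * T ≤ (x + E * u) * (y * M + v * T) := by
    have hid : (x + E * u) * (y * M + v * T) - (M + E * T) =
        (M - x) * (u * (E * y - v)) + (u - T) * (x * (E * y - v)) := by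
      linear_combination (M + E * T) * hrel
    have hP1 : 0 ≤ (M - x) * (u * (E * y - v)) :=
      mul_nonneg (sub_nonneg.2 hMlb) (mul_nonneg hupos.le (sub_nonneg.2 hW))
    have hP2 : 0 ≤ (u - T) * (x * (E * y - v)) :=
      mul_nonneg (sub_nonneg.2 hTub) (mul_nonneg hxpos.le (sub_nonneg.2 hW))
    linarith
  calc ∑ i, p i ^ α ≤ M + E * T := hA
    _ ≤ (x + E * u) * (y * M + v * T) := hkey
    _ ≤ (x + E * u) * ∑ i, q i ^ α := by
        apply mul_le_mul_of_nonneg_left hB (by nlinarith)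

/-- Audenaert's tight uniform continuity bound for the α-Rényi entropy, 0 < α < 1. -/
theorem stmt12 {d : ℕ} (hd : 2 ≤ d) (α : ℝ) (hα0 : 0 < α) (hα1 : α < 1)
    (ε : ℝ) (hε0 : 0 ≤ ε) (hε1 : ε ≤ 1 - 1 / d)
    (H : (Fin d → ℝ) → ℝ)
    (hH : ∀ p, H p = (1 / (1 - α)) * Real.logb 2 (∑ i, p i ^ α))
    (p q : Fin d → ℝ)
    (hp : (∀ i, 0 ≤ p i) ∧ ∑ i, p i = 1) (hq : (∀ i, 0 ≤ q i) ∧ ∑ i, q i = 1)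
    (hTV : (1 / 2) * ∑ i, |p i - q i| ≤ ε) :
    |H p - H q| ≤ (1 / (1 - α)) *
      Real.logb 2 ((1 - ε) ^ α + ((d : ℝ) - 1) ^ (1 - α) * ε ^ α) := by
  obtain ⟨hpnn, hp1⟩ := hp
  obtain ⟨hqnn, hq1⟩ := hq
  rcases eq_or_lt_of_le hε0 with hε | hε
  · -- ε = 0 : p = q
    have hsum0 : ∑ i, |p i - q i| = 0 := by
      have h1 : 0 ≤ ∑ i, |p i - q i| := Finset.sum_nonneg fun i _ => abs_nonneg _
      have h2 : ∑ i, |p i - q i| ≤ 2 * ε := by linarith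
      rw [← hε] at h2; linarith
    have hpq : p = q := by
      funext i
      have := (Finset.sum_eq_zero_iff_of_nonneg (fun i (_ : i ∈ Finset.univ) => abs_nonneg (p i - q i))).mp
        hsum0 i (Finset.mem_univ i)
      have := abs_eq_zero.mp this
      linarith
    rw [hpq, sub_self, abs_zero, ← hε]
    have : ((1:ℝ) - 0) ^ α + ((d : ℝ) - 1) ^ (1 - α) * (0:ℝ) ^ α = 1 := by
      rw [Real.zero_rpow hα0.ne']
      simp
    rw [this, Real.logb_one, mul_zero]
  · -- ε > 0
    have hd1 : (1 : ℝ) ≤ (d : ℝ) - 1 := by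
      have : (2 : ℝ) ≤ (d : ℝ) := by exact_mod_cast hd
      linarith
    have h1ε : (0 : ℝ) < 1 - ε := by
      have : (0:ℝ) < 1 / (d : ℝ) := by positivity
      linarith
    set f : ℝ := (1 - ε) ^ α + ((d : ℝ) - 1) ^ (1 - α) * ε ^ α with hf
    have hfpos : 0 < f := by
      have h1 : (0:ℝ) < (1 - ε) ^ α := Real.rpow_pos_of_pos h1ε α
      have h2 : (0:ℝ) ≤ ((d : ℝ) - 1) ^ (1 - α) * ε ^ α := by positivity
      linarith
    have hSp1 : (1:ℝ) ≤ ∑ i, p i ^ α := by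
      have := rpow_sum_le hα0 hα1.le Finset.univ p (fun i _ => hpnn i)
      rwa [hp1, Real.one_rpow] at this
    have hSq1 : (1:ℝ) ≤ ∑ i, q i ^ α := by
      have := rpow_sum_le hα0 hα1.le Finset.univ q (fun i _ => hqnn i)
      rwa [hq1, Real.one_rpow] at this
    have hSppos : (0:ℝ) < ∑ i, p i ^ α := by linarith
    have hSqpos : (0:ℝ) < ∑ i, q i ^ α := by linarith
    have hTV' : (1 / 2) * ∑ i, |q i - p i| ≤ ε := by
      have : ∑ i, |q i - p i| = ∑ i, |p i - q i| :=
        Finset.sum_congr rfl fun i _ => abs_sub_comm _ _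
      rw [this]; exact hTV
    have h1 := key_ratio hd hα0 hα1 hε hε1 p q hpnn hp1 hqnn hq1 hTV
    have h2 := key_ratio hd hα0 hα1 hε hε1 q p hqnn hq1 hpnn hp1 hTV'
    have hc : (0:ℝ) < 1 / (1 - α) := by
      have : (0:ℝ) < 1 - α := by linarith
      positivity
    rw [hH p, hH q, abs_sub_le_iff]
    have hlog : ∀ S1 S2 : ℝ, 0 < S1 → 0 < S2 → S1 ≤ f * S2 →
        Real.logb 2 S1 - Real.logb 2 S2 ≤ Real.logb 2 f := by
      intro S1 S2 hS1 hS2 hle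
      have h3 : Real.logb 2 S1 ≤ Real.logb 2 (f * S2) :=
        (Real.logb_le_logb (by norm_num) hS1 (by positivity)).mpr hle
      rw [Real.logb_mul hfpos.ne' hS2.ne'] at h3
      linarith
    constructor
    · have := hlog _ _ hSppos hSqpos h1
      calc (1 / (1 - α)) * Real.logb 2 (∑ i, p i ^ α) -
            (1 / (1 - α)) * Real.logb 2 (∑ i, q i ^ α)
          = (1 / (1 - α)) * (Real.logb 2 (∑ i, p i ^ α) - Real.logb 2 (∑ i, q i ^ α)) := by
            ring
        _ ≤ (1 / (1 - α)) * Real.logb 2 f := by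
            apply mul_le_mul_of_nonneg_left this hc.le
    · have := hlog _ _ hSqpos hSppos h2
      calc (1 / (1 - α)) * Real.logb 2 (∑ i, q i ^ α) -
            (1 / (1 - α)) * Real.logb 2 (∑ i, p i ^ α)
          = (1 / (1 - α)) * (Real.logb 2 (∑ i, q i ^ α) - Real.logb 2 (∑ i, p i ^ α)) := by
            ring
        _ ≤ (1 / (1 - α)) * Real.logb 2 f := by
            apply mul_le_mul_of_nonneg_left this hc.le
end

section
/- For α > 1, ε ∈ [0, 1 − 1/d], and probability vectors p, q in ℝ^d with TV(p,q) ≤ ε, the α-Tsallis entropies satisfy |T_α(p) − T_α(q)| ≤ (1/(1−α))·(ε^α·(d−1)^{1−α} + (1−ε)^α − 1), with equality when q = (1,0,...,0) and p = (1−ε, ε/(d−1), ..., ε/(d−1)). -/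
open Finset Real

private lemma incr_diff {α : ℝ} (hα : 1 ≤ α) {a b s : ℝ} (ha : 0 ≤ a) (hab : a ≤ b)
    (hs : 0 ≤ s) : (a + s) ^ α - a ^ α ≤ (b + s) ^ α - b ^ α := by
  rcases eq_or_lt_of_le (show a ≤ b + s by linarith) with h | h
  · have hb : a = b := le_antisymm hab (by linarith)
    have hs0 : s = 0 := by linarith
    simp [hb, hs0]
  · set lam := s / (b + s - a) with hlam
    have hd : 0 < b + s - a := by linarith
    have hl0 : 0 ≤ lam := div_nonneg hs hd.le
    have hl1 : lam ≤ 1 := by rw [hlam, div_le_one hd]; linarith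
    have hx : lam * (b + s - a) = s := div_mul_cancel₀ s hd.ne'
    have hcvx := convexOn_rpow hα
    have hbs : (0:ℝ) ≤ b + s := by linarith
    have h1 := hcvx.2 (Set.mem_Ici.2 ha) (Set.mem_Ici.2 hbs)
      (sub_nonneg.2 hl1) hl0 (by ring)
    have h2 := hcvx.2 (Set.mem_Ici.2 ha) (Set.mem_Ici.2 hbs)
      hl0 (sub_nonneg.2 hl1) (by ring)
    simp only [smul_eq_mul] at h1 h2
    have e1 : (1 - lam) * a + lam * (b + s) = a + s := by linear_combination hx
    have e2 : lam * a + (1 - lam) * (b + s) = b := by linear_combination -hx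
    rw [e1] at h1
    rw [e2] at h2
    linarith

private lemma sum_diff_le {α : ℝ} (hα : 1 ≤ α) {ι : Type*} [DecidableEq ι] (s : Finset ι) (r u : ι → ℝ)
    (hr : ∀ i, 0 ≤ r i) (hu : ∀ i, 0 ≤ u i) :
    ∑ i ∈ s, ((r i + u i) ^ α - r i ^ α)
      ≤ ((∑ i ∈ s, r i) + ∑ i ∈ s, u i) ^ α - (∑ i ∈ s, r i) ^ α := by
  induction s using Finset.induction_on with
  | empty => simp
  | insert _ _ hj =>
    rename_i j s ih
    rw [Finset.sum_insert hj, Finset.sum_insert hj, Finset.sum_insert hj]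
    set R := ∑ i ∈ s, r i with hR
    set U := ∑ i ∈ s, u i with hU
    have hR0 : 0 ≤ R := Finset.sum_nonneg fun i _ => hr i
    have hU0 : 0 ≤ U := Finset.sum_nonneg fun i _ => hu i
    have A := incr_diff hα (hr j) (show r j ≤ r j + R by linarith) (hu j)
    have B := incr_diff hα hR0 (show R ≤ r j + R + u j by linarith [hr j, hu j]) hU0
    have e : r j + R + (u j + U) = r j + R + u j + U := by ring
    rw [e]
    have e2 : R + U + u j + r j = r j + R + u j + U := by ring
    rw [show r j + R + u j = R + u j + r j from by ring] at A B ⊢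
    linarith [A, B, ih]

private lemma sum_rpow_ge {α : ℝ} (hα : 1 ≤ α) {ι : Type*} (s : Finset ι) (hs : s.Nonempty)
    (v : ι → ℝ) (hv : ∀ i ∈ s, 0 ≤ v i) :
    (∑ i ∈ s, v i) ^ α * (s.card : ℝ) ^ (1 - α) ≤ ∑ i ∈ s, v i ^ α := by
  set n : ℝ := (s.card : ℝ) with hn
  have hn0 : 0 < n := by
    have := Finset.card_pos.2 hs
    rw [hn]
    exact_mod_cast this
  have hw : ∑ _i ∈ s, (1 / n) = 1 := by
    rw [Finset.sum_const, nsmul_eq_mul]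
    field_simp
    exact hn.symm
  have h := Real.rpow_arith_mean_le_arith_mean_rpow s (fun _ => 1 / n) v
    (fun i _ => by positivity) hw hv hα
  rw [← Finset.mul_sum, ← Finset.mul_sum] at h
  have hV : 0 ≤ ∑ i ∈ s, v i := Finset.sum_nonneg hv
  rw [Real.mul_rpow (by positivity) hV] at h
  have h2 := mul_le_mul_of_nonneg_left h hn0.le
  rw [← mul_assoc, ← mul_assoc, mul_one_div_cancel hn0.ne', one_mul] at h2
  calc (∑ i ∈ s, v i) ^ α * n ^ (1 - α)
      = n * (1 / n) ^ α * (∑ i ∈ s, v i) ^ α := by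
        rw [show (1 : ℝ) - α = 1 + (-α) by ring, Real.rpow_add hn0, Real.rpow_one,
          Real.rpow_neg hn0.le, one_div, Real.inv_rpow hn0.le]
        ring
    _ ≤ ∑ i ∈ s, v i ^ α := h2

private lemma f_mono {d : ℕ} (hd : 2 ≤ d) {α : ℝ} (hα : 1 < α) :
    MonotoneOn (fun t : ℝ => 1 - (1 - t) ^ α - t ^ α * ((d : ℝ) - 1) ^ (1 - α))
      (Set.Icc 0 (1 - 1 / (d : ℝ))) := by
  have hdpos : (0:ℝ) < d := by positivity
  have hd1 : (1:ℝ) ≤ (d:ℝ) - 1 := by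
    have : (2:ℝ) ≤ d := by exact_mod_cast hd
    linarith
  have hd1pos : (0:ℝ) < (d:ℝ) - 1 := by linarith
  set C : ℝ := ((d : ℝ) - 1) ^ (1 - α) with hC
  have hC0 : 0 ≤ C := Real.rpow_nonneg (by linarith) _
  have hub : 1 - 1 / (d:ℝ) < 1 := by
    have : 0 < 1 / (d:ℝ) := by positivity
    linarith
  have hder : ∀ t ∈ Set.Ioo (0:ℝ) (1 - 1 / (d:ℝ)),
      HasDerivAt (fun t : ℝ => 1 - (1 - t) ^ α - t ^ α * C)
        (0 - (-1 * α * (1 - t) ^ (α - 1)) - α * t ^ (α - 1) * C) t := by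
    intro t ht
    have ht0 : 0 < t := ht.1
    have h1t : 0 < 1 - t := by linarith [ht.2]
    have H1 : HasDerivAt (fun t : ℝ => (1 - t) ^ α) (-1 * α * (1 - t) ^ (α - 1)) t := by
      have := ((hasDerivAt_id t).const_sub 1).rpow_const (p := α) (Or.inl h1t.ne')
      simpa using this
    have H2 : HasDerivAt (fun t : ℝ => t ^ α) (α * t ^ (α - 1)) t :=
      Real.hasDerivAt_rpow_const (Or.inl ht0.ne')
    exact ((hasDerivAt_const t (1:ℝ)).sub H1).sub (H2.mul_const C)
  have hI : interior (Set.Icc (0:ℝ) (1 - 1 / (d:ℝ))) = Set.Ioo 0 (1 - 1 / (d:ℝ)) :=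
    interior_Icc
  apply monotoneOn_of_deriv_nonneg (convex_Icc _ _)
  · -- continuity
    apply ContinuousOn.sub
    apply ContinuousOn.sub continuousOn_const
    · intro t _
      exact (ContinuousAt.comp (Real.continuousAt_rpow_const _ _ (Or.inr (by linarith)))
        ((continuous_const.sub continuous_id).continuousAt)).continuousWithinAt
    · apply ContinuousOn.mul _ continuousOn_const
      intro t _
      exact (Real.continuousAt_rpow_const _ _ (Or.inr (by linarith))).continuousWithinAt
  · rw [hI]
    intro t ht
    exact (hder t ht).differentiableAt.differentiableWithinAt
  · rw [hI]
    intro t ht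
    rw [(hder t ht).deriv]
    have ht0 : 0 < t := ht.1
    have htub : t < 1 - 1 / (d:ℝ) := ht.2
    have h1t : 0 < 1 - t := by linarith
    have hα1 : (0:ℝ) ≤ α - 1 := by linarith
    have hkey : t ^ (α - 1) * C ≤ (1 - t) ^ (α - 1) := by
      have hle : t / ((d:ℝ) - 1) ≤ 1 - t := by
        rw [div_le_iff₀ hd1pos]
        have htd : t * d < d - 1 := by
          have := (div_lt_iff₀ hdpos).1 (by linarith : 1 / (d:ℝ) < 1 - t)
          nlinarith
        nlinarith
      have := Real.rpow_le_rpow (by positivity) hle hα1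
      rw [Real.div_rpow ht0.le hd1pos.le] at this
      calc t ^ (α - 1) * C = t ^ (α - 1) / ((d:ℝ) - 1) ^ (α - 1) := by
            rw [hC, show (1:ℝ) - α = -(α - 1) by ring, Real.rpow_neg hd1pos.le]
            ring
        _ ≤ (1 - t) ^ (α - 1) := this
    have hαpos : 0 < α := by linarith
    nlinarith [hkey]

private lemma incr_diff' {α : ℝ} (hα : 1 ≤ α) {r v : ℝ} (hr : 0 ≤ r) (hv : 0 ≤ v) :
    r ^ α + v ^ α ≤ (r + v) ^ α := by
  have h := incr_diff hα (le_refl (0:ℝ)) hr hv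
  rw [zero_add, Real.zero_rpow (show α ≠ 0 by intro h0; rw [h0] at hα; linarith), sub_zero] at h
  linarith

private lemma key_ineq {d : ℕ} (hd : 2 ≤ d) {α : ℝ} (hα : 1 < α) {ε : ℝ}
    (hε0 : 0 ≤ ε) (hε1 : ε ≤ 1 - 1 / (d:ℝ)) (p q : Fin d → ℝ)
    (hp : ∀ i, 0 ≤ p i) (hp1 : ∑ i, p i = 1)
    (hq : ∀ i, 0 ≤ q i) (hq1 : ∑ i, q i = 1)
    (htv : (1/2) * ∑ i, |p i - q i| ≤ ε) :
    ∑ i, q i ^ α - ∑ i, p i ^ α ≤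
      1 - (1 - ε) ^ α - ε ^ α * ((d:ℝ) - 1) ^ (1 - α) := by
  have hαpos : (0:ℝ) < α := by linarith
  have hd1 : (1:ℝ) ≤ (d:ℝ) - 1 := by
    have : (2:ℝ) ≤ d := by exact_mod_cast hd
    linarith
  set C : ℝ := ((d : ℝ) - 1) ^ (1 - α) with hC
  have hC0 : 0 ≤ C := Real.rpow_nonneg (by linarith) _
  set t : ℝ := (1/2) * ∑ i, |p i - q i| with ht
  have ht0 : 0 ≤ t := by
    rw [ht]
    have : (0:ℝ) ≤ ∑ i, |p i - q i| := Finset.sum_nonneg fun i _ => abs_nonneg _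
    linarith
  -- main step : bound by f t
  have main : ∑ i, q i ^ α - ∑ i, p i ^ α ≤ 1 - (1 - t) ^ α - t ^ α * C := by
    rcases eq_or_lt_of_le ht0 with h0 | htpos
    · -- t = 0 : p = q
      have hsum0 : ∑ i, |p i - q i| = 0 := by
        rw [ht] at h0; linarith
      have hpq : ∀ i, p i = q i := by
        intro i
        have h := (Finset.sum_eq_zero_iff_of_nonneg
          (fun i _ => abs_nonneg (p i - q i))).1 hsum0 i (Finset.mem_univ i)
        have := abs_eq_zero.1 h
        linarith
      have : ∑ i, q i ^ α = ∑ i, p i ^ α := by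
        apply Finset.sum_congr rfl; intro i _; rw [hpq i]
      rw [this, ← h0]
      simp [Real.zero_rpow hαpos.ne', Real.one_rpow]
    · set u : Fin d → ℝ := fun i => max (q i - p i) 0 with hu
      set v : Fin d → ℝ := fun i => max (p i - q i) 0 with hv
      set r : Fin d → ℝ := fun i => min (p i) (q i) with hr
      have hu0 : ∀ i, 0 ≤ u i := fun i => le_max_right _ _
      have hv0 : ∀ i, 0 ≤ v i := fun i => le_max_right _ _
      have hr0 : ∀ i, 0 ≤ r i := fun i => le_min (hp i) (hq i)
      have hru : ∀ i, r i + u i = q i := by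
        intro i; rcases le_total (p i) (q i) with h | h
        · simp [hu, hv, hr, min_eq_left h, max_eq_left (by linarith : (0:ℝ) ≤ q i - p i)]
        · simp [hu, hv, hr, min_eq_right h, max_eq_right (by linarith : q i - p i ≤ 0)]
      have hrv : ∀ i, r i + v i = p i := by
        intro i; rcases le_total (p i) (q i) with h | h
        · simp [hu, hv, hr, min_eq_left h, max_eq_right (by linarith : p i - q i ≤ 0)]
        · simp [hu, hv, hr, min_eq_right h, max_eq_left (by linarith : (0:ℝ) ≤ p i - q i)]
      have habs : ∀ i, |p i - q i| = u i + v i := by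
        intro i
        show |p i - q i| = max (q i - p i) 0 + max (p i - q i) 0
        rcases le_total (p i) (q i) with h | h
        · rw [abs_of_nonpos (by linarith : p i - q i ≤ 0),
            max_eq_left (by linarith : (0:ℝ) ≤ q i - p i),
            max_eq_right (by linarith : p i - q i ≤ 0)]
          ring
        · rw [abs_of_nonneg (by linarith : (0:ℝ) ≤ p i - q i),
            max_eq_right (by linarith : q i - p i ≤ 0),
            max_eq_left (by linarith : (0:ℝ) ≤ p i - q i)]
          ring
      have huv_sum : (∑ i, u i) + ∑ i, v i = 2 * t := by
        rw [← Finset.sum_add_distrib]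
        rw [ht]
        rw [show ∑ i, (u i + v i) = ∑ i, |p i - q i| from
          Finset.sum_congr rfl fun i _ => (habs i).symm]
        ring
      have hdiff_sum : (∑ i, u i) - ∑ i, v i = 0 := by
        rw [← Finset.sum_sub_distrib]
        have : ∀ i, u i - v i = q i - p i := by
          intro i
          have := hru i; have := hrv i; linarith
        rw [Finset.sum_congr rfl fun i _ => this i, Finset.sum_sub_distrib, hq1, hp1]
        ring
      have hu_sum : ∑ i, u i = t := by linarith
      have hv_sum : ∑ i, v i = t := by linarith
      have hr_sum : ∑ i, r i = 1 - t := by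
        have : ∑ i, (r i + v i) = 1 := by
          rw [Finset.sum_congr rfl fun i _ => hrv i]; exact hp1
        rw [Finset.sum_add_distrib, hv_sum] at this
        linarith
      -- Step 1
      have S1 : ∑ i, q i ^ α - ∑ i, r i ^ α ≤ 1 - (1 - t) ^ α := by
        have h := sum_diff_le hα.le Finset.univ r u hr0 hu0
        rw [hr_sum, hu_sum] at h
        rw [show (1 - t) + t = 1 by ring, Real.one_rpow] at h
        calc ∑ i, q i ^ α - ∑ i, r i ^ α
            = ∑ i, ((r i + u i) ^ α - r i ^ α) := by
              rw [Finset.sum_sub_distrib]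
              congr 1
              exact Finset.sum_congr rfl fun i _ => by rw [hru i]
          _ ≤ 1 - (1 - t) ^ α := h
      -- Step 2
      have S2 : ∑ i, r i ^ α + ∑ i, v i ^ α ≤ ∑ i, p i ^ α := by
        rw [← Finset.sum_add_distrib]
        apply Finset.sum_le_sum
        intro i _
        rw [← hrv i]
        exact incr_diff' hα.le (hr0 i) (hv0 i)
      -- Step 3
      have S3 : t ^ α * C ≤ ∑ i, v i ^ α := by
        obtain ⟨i₀, hi₀⟩ : ∃ i, 0 < u i := by
          by_contra h
          push_neg at h
          have : ∑ i, u i = 0 :=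
            Finset.sum_eq_zero fun i _ => le_antisymm (h i) (hu0 i)
          rw [hu_sum] at this; linarith
        have hvi₀ : v i₀ = 0 := by
          have hqp : p i₀ < q i₀ := by
            by_contra h
            push_neg at h
            have : u i₀ = 0 := max_eq_right (by linarith)
            linarith
          exact max_eq_right (by linarith)
        set s : Finset (Fin d) := Finset.univ.erase i₀ with hs
        have hcard : (s.card : ℝ) = (d : ℝ) - 1 := by
          rw [hs, Finset.card_erase_of_mem (Finset.mem_univ _), Finset.card_univ,
            Fintype.card_fin]
          have : 1 ≤ d := by omega
          push_cast [Nat.cast_sub this]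
          ring
        have hsne : s.Nonempty := by
          rw [← Finset.card_pos, Finset.card_erase_of_mem (Finset.mem_univ _),
            Finset.card_univ, Fintype.card_fin]
          omega
        have hvs : ∑ i ∈ s, v i = t := by
          have := Finset.add_sum_erase Finset.univ v (Finset.mem_univ i₀)
          rw [hvi₀, zero_add] at this
          rw [hs, this, hv_sum]
        have hpm := sum_rpow_ge hα.le s hsne v (fun i _ => hv0 i)
        rw [hvs, hcard] at hpm
        calc t ^ α * C ≤ ∑ i ∈ s, v i ^ α := hpm
          _ ≤ ∑ i, v i ^ α := by
            apply Finset.sum_le_sum_of_subset_of_nonneg (Finset.subset_univ s)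
            intro i _ _
            exact Real.rpow_nonneg (hv0 i) _
      linarith
  -- monotonicity
  have hmem_t : t ∈ Set.Icc (0:ℝ) (1 - 1 / (d:ℝ)) := ⟨ht0, le_trans htv hε1⟩
  have hmem_ε : ε ∈ Set.Icc (0:ℝ) (1 - 1 / (d:ℝ)) := ⟨hε0, hε1⟩
  have := f_mono hd hα hmem_t hmem_ε htv
  simp only at this
  linarith

/-- Tight uniform continuity bound for the α-Tsallis entropy, α > 1, with equality
at `q = (1,0,…,0)` and `p = (1-ε, ε/(d-1), …, ε/(d-1))`. -/
theorem stmt13 {d : ℕ} (hd : 2 ≤ d) (α : ℝ) (hα : 1 < α)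
    (ε : ℝ) (hε0 : 0 ≤ ε) (hε1 : ε ≤ 1 - 1 / d)
    (T : (Fin d → ℝ) → ℝ)
    (hT : ∀ p, T p = (1 / (1 - α)) * ((∑ i, p i ^ α) - 1)) :
    (∀ p q : Fin d → ℝ,
        ((∀ i, 0 ≤ p i) ∧ ∑ i, p i = 1) → ((∀ i, 0 ≤ q i) ∧ ∑ i, q i = 1) →
        (1 / 2) * ∑ i, |p i - q i| ≤ ε →
        |T p - T q| ≤ (1 / (1 - α)) *
          (ε ^ α * ((d : ℝ) - 1) ^ (1 - α) + (1 - ε) ^ α - 1)) ∧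
      (∀ p q : Fin d → ℝ,
        (p = fun i : Fin d => if (i : ℕ) = 0 then 1 - ε else ε / ((d : ℝ) - 1)) →
        (q = fun i : Fin d => if (i : ℕ) = 0 then (1 : ℝ) else 0) →
        |T p - T q| = (1 / (1 - α)) *
          (ε ^ α * ((d : ℝ) - 1) ^ (1 - α) + (1 - ε) ^ α - 1)) := by
  have hαpos : (0:ℝ) < α := by linarith
  have h1α : (1:ℝ) - α < 0 := by linarith
  have hα1 : (0:ℝ) < α - 1 := by linarith
  have hd1 : (1:ℝ) ≤ (d:ℝ) - 1 := by
    have : (2:ℝ) ≤ d := by exact_mod_cast hd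
    linarith
  have hd1pos : (0:ℝ) < (d:ℝ) - 1 := by linarith
  set C : ℝ := ((d : ℝ) - 1) ^ (1 - α) with hC
  have hC0 : 0 ≤ C := Real.rpow_nonneg (by linarith) _
  -- RHS rewriting
  have hRHS : (1 / (1 - α)) * (ε ^ α * C + (1 - ε) ^ α - 1)
      = (1 / (α - 1)) * (1 - (1 - ε) ^ α - ε ^ α * C) := by
    have h : (1:ℝ) / (1 - α) = -(1 / (α - 1)) := by
      rw [one_div, one_div, ← inv_neg]
      congr 1
      ring
    rw [h]
    ring
  -- nonnegativity of g(ε)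
  have hg : 0 ≤ 1 - (1 - ε) ^ α - ε ^ α * C := by
    have hmem0 : (0:ℝ) ∈ Set.Icc (0:ℝ) (1 - 1 / (d:ℝ)) := ⟨le_refl 0, by linarith⟩
    have hmemε : ε ∈ Set.Icc (0:ℝ) (1 - 1 / (d:ℝ)) := ⟨hε0, hε1⟩
    have := f_mono hd hα hmem0 hmemε hε0
    simp only [sub_zero, Real.one_rpow, Real.zero_rpow (show α ≠ 0 by positivity),
      zero_mul, sub_self] at this
    linarith
  constructor
  · rintro p q ⟨hp, hp1⟩ ⟨hq, hq1⟩ htv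
    have habs1 : ∑ i, q i ^ α - ∑ i, p i ^ α ≤ 1 - (1 - ε) ^ α - ε ^ α * C :=
      key_ineq hd hα hε0 hε1 p q hp hp1 hq hq1 htv
    have htv' : (1/2) * ∑ i, |q i - p i| ≤ ε := by
      rw [show ∑ i, |q i - p i| = ∑ i, |p i - q i| from
        Finset.sum_congr rfl fun i _ => abs_sub_comm _ _]
      exact htv
    have habs2 : ∑ i, p i ^ α - ∑ i, q i ^ α ≤ 1 - (1 - ε) ^ α - ε ^ α * C :=
      key_ineq hd hα hε0 hε1 q p hq hq1 hp hp1 htv'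
    have hT' : |T p - T q|
        = (1 / (α - 1)) * |(∑ i, p i ^ α) - ∑ i, q i ^ α| := by
      rw [hT, hT]
      rw [show (1 / (1 - α)) * ((∑ i, p i ^ α) - 1) - (1 / (1 - α)) * ((∑ i, q i ^ α) - 1)
        = (1 / (1 - α)) * ((∑ i, p i ^ α) - ∑ i, q i ^ α) by ring]
      rw [abs_mul]
      congr 1
      rw [abs_of_nonpos (by
        apply div_nonpos_of_nonneg_of_nonpos <;> linarith)]
      rw [one_div, one_div, ← inv_neg]
      congr 1
      ring
    rw [hT', hRHS]
    apply mul_le_mul_of_nonneg_left _ (by positivity)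
    rw [abs_le]
    constructor <;> linarith
  · rintro p q hpdef hqdef
    haveI : NeZero d := ⟨by omega⟩
    have hSq : ∑ i, q i ^ α = 1 := by
      rw [hqdef]
      have : ∀ i : Fin d, ((if (i : ℕ) = 0 then (1:ℝ) else 0)) ^ α
          = if i = 0 then (1:ℝ) else 0 := by
        intro i
        have hiff : ((i : ℕ) = 0) ↔ (i = 0) := Fin.val_eq_zero_iff
        simp only [hiff]
        split
        · exact Real.one_rpow α
        · exact Real.zero_rpow (by positivity)
      rw [Finset.sum_congr rfl fun i _ => this i]
      simp
    have hSp : ∑ i, p i ^ α = (1 - ε) ^ α + ε ^ α * C := by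
      rw [hpdef]
      have hterm : ∀ i : Fin d, ((if (i : ℕ) = 0 then 1 - ε else ε / ((d:ℝ) - 1))) ^ α
          = if i = 0 then (1 - ε) ^ α else (ε / ((d:ℝ) - 1)) ^ α := by
        intro i
        have hiff : ((i : ℕ) = 0) ↔ (i = 0) := Fin.val_eq_zero_iff
        simp only [hiff]
        split <;> rfl
      rw [Finset.sum_congr rfl fun i _ => hterm i]
      rw [← Finset.add_sum_erase Finset.univ _ (Finset.mem_univ (0 : Fin d))]
      rw [if_pos rfl]
      congr 1
      have hconst : ∀ i ∈ Finset.univ.erase (0 : Fin d),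
          (if i = 0 then (1 - ε) ^ α else (ε / ((d:ℝ) - 1)) ^ α)
            = (ε / ((d:ℝ) - 1)) ^ α := by
        intro i hi
        rw [if_neg (Finset.ne_of_mem_erase hi)]
      rw [Finset.sum_congr rfl hconst, Finset.sum_const, nsmul_eq_mul]
      rw [Finset.card_erase_of_mem (Finset.mem_univ _), Finset.card_univ, Fintype.card_fin]
      have hcard : ((d - 1 : ℕ) : ℝ) = (d : ℝ) - 1 := by
        have : 1 ≤ d := by omega
        push_cast [Nat.cast_sub this]
        ring
      rw [hcard, Real.div_rpow hε0 hd1pos.le]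
      rw [hC, show (1:ℝ) - α = 1 - α from rfl]
      rw [Real.rpow_sub hd1pos 1 α, Real.rpow_one]
      have hdα : ((d:ℝ) - 1) ^ α ≠ 0 := by
        apply ne_of_gt
        exact Real.rpow_pos_of_pos hd1pos α
      field_simp
    rw [hT, hT, hSp, hSq]
    rw [show (1 / (1 - α)) * ((1 - ε) ^ α + ε ^ α * C - 1) - (1 / (1 - α)) * (1 - 1)
      = (1 / (1 - α)) * (ε ^ α * C + (1 - ε) ^ α - 1) by ring]
    rw [abs_of_nonneg]
    rw [hRHS]
    positivity
end

section
/- Let f : [0,1] → ℝ be strictly convex with f(0) = f(1) = 0 and define S_f(p) = −Σ_i f(p_i) on the probability simplex in ℝ^d. Then for ε ∈ [0, 1 − 1/d] and probability vectors p, q with TV(p,q) ≤ ε, |S_f(p) − S_f(q)| ≤ −f(1−ε) − (d−1)·f(ε/(d−1)). -/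
open Finset Real

/-- Monotonicity of equal-length increments of a convex function. -/
lemma conv_inc {f : ℝ → ℝ} (hf : ConvexOn ℝ (Set.Icc (0 : ℝ) 1) f)
    {u v h : ℝ} (hu : 0 ≤ u) (huv : u ≤ v) (hh : 0 ≤ h) (hvh : v + h ≤ 1) :
    f (u + h) - f u ≤ f (v + h) - f v := by
  rcases eq_or_lt_of_le (show u ≤ v + h by linarith) with heq | hlt
  · have h0 : h = 0 := by linarith
    have huv' : u = v := by linarith
    simp [h0, huv']
  · set lam := h / (v + h - u) with hlam
    have hD : 0 < v + h - u := by linarith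
    have hcan : lam * (v + h - u) = h := div_mul_cancel₀ h (ne_of_gt hD)
    have hlam0 : 0 ≤ lam := div_nonneg hh hD.le
    have hlam1 : lam ≤ 1 := (div_le_one hD).mpr (by linarith)
    have hmemu : u ∈ Set.Icc (0:ℝ) 1 := ⟨hu, by linarith⟩
    have hmemv : v + h ∈ Set.Icc (0:ℝ) 1 := ⟨by linarith, hvh⟩
    have h1 := hf.2 hmemu hmemv (by linarith : (0:ℝ) ≤ 1 - lam) hlam0 (by ring)
    have h2 := hf.2 hmemu hmemv hlam0 (by linarith : (0:ℝ) ≤ 1 - lam) (by ring)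
    simp only [smul_eq_mul] at h1 h2
    have e1 : (1 - lam) * u + lam * (v + h) = u + h := by linear_combination hcan
    have e2 : lam * u + (1 - lam) * (v + h) = v := by linear_combination -hcan
    rw [e1] at h1
    rw [e2] at h2
    linarith

set_option maxHeartbeats 1000000 in
/-- One-sided version of the continuity bound. -/
lemma key_bound {d : ℕ} (hd : 2 ≤ d) (f : ℝ → ℝ)
    (hf : ConvexOn ℝ (Set.Icc (0 : ℝ) 1) f) (hf0 : f 0 = 0) (hf1 : f 1 = 0)
    (ε : ℝ) (hε0 : 0 ≤ ε) (hε1 : ε ≤ 1 - 1 / d)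
    (p q : Fin d → ℝ)
    (hp0 : ∀ i, 0 ≤ p i) (hp1 : ∑ i, p i = 1)
    (hq0 : ∀ i, 0 ≤ q i) (hq1 : ∑ i, q i = 1)
    (hTV : (1 / 2) * ∑ i, |p i - q i| ≤ ε) :
    ∑ i, f (q i) - ∑ i, f (p i) ≤ -f (1 - ε) - ((d : ℝ) - 1) * f (ε / ((d : ℝ) - 1)) := by
  have hd2 : (2:ℝ) ≤ (d:ℝ) := by exact_mod_cast hd
  have hdpos : (0:ℝ) < (d:ℝ) := by linarith
  have hd1 : (0:ℝ) < (d:ℝ) - 1 := by linarith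
  have hdinv : 0 < 1 / (d:ℝ) := by positivity
  have hdinv1 : 1 / (d:ℝ) ≤ 1 := by rw [div_le_one hdpos]; linarith
  have hεT : ε ≤ 1 - 1/(d:ℝ) := hε1
  have hε1' : ε < 1 := by linarith
  have hp1' : ∀ i, p i ≤ 1 := by
    intro i
    calc p i ≤ ∑ k, p k := Finset.single_le_sum (fun k _ => hp0 k) (Finset.mem_univ i)
    _ = 1 := hp1
  have hq1' : ∀ i, q i ≤ 1 := by
    intro i
    calc q i ≤ ∑ k, q k := Finset.single_le_sum (fun k _ => hq0 k) (Finset.mem_univ i)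
    _ = 1 := hq1
  obtain ⟨j, -, hj⟩ := Finset.exists_max_image (Finset.univ : Finset (Fin d)) q
    ⟨⟨0, by omega⟩, Finset.mem_univ _⟩
  have hj' : ∀ i, q i ≤ q j := fun i => hj i (Finset.mem_univ i)
  set c : Fin d → ℝ := fun i => min (p i) (q i) with hc
  set a : Fin d → ℝ := fun i => p i - c i with ha
  set b : Fin d → ℝ := fun i => q i - c i with hb
  have ha0 : ∀ i, 0 ≤ a i := fun i => sub_nonneg.mpr (min_le_left _ _)
  have hb0 : ∀ i, 0 ≤ b i := fun i => sub_nonneg.mpr (min_le_right _ _)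
  have hc0 : ∀ i, 0 ≤ c i := fun i => le_min (hp0 i) (hq0 i)
  have hca : ∀ i, c i + a i = p i := fun i => by simp [ha]
  have hcb : ∀ i, c i + b i = q i := fun i => by simp [hb]
  have habs : ∀ i, a i + b i = |p i - q i| := by
    intro i
    rcases le_total (p i) (q i) with h | h
    · rw [abs_of_nonpos (by linarith)]
      simp [ha, hb, hc, min_eq_left h]
    · rw [abs_of_nonneg (by linarith)]
      simp [ha, hb, hc, min_eq_right h]
  have hsum_eq : ∑ i, a i = ∑ i, b i := by
    have h1 : ∑ i, a i - ∑ i, b i = ∑ i, (p i - q i) := by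
      rw [← Finset.sum_sub_distrib]
      exact Finset.sum_congr rfl fun i _ => by simp [ha, hb]
    have h2 : ∑ i, (p i - q i) = 0 := by rw [Finset.sum_sub_distrib, hp1, hq1]; ring
    linarith
  set t := ∑ i, a i with ht
  have ht_ε : t ≤ ε := by
    have h1 : ∑ i, |p i - q i| = 2 * t := by
      calc ∑ i, |p i - q i| = ∑ i, (a i + b i) :=
            Finset.sum_congr rfl fun i _ => (habs i).symm
      _ = ∑ i, a i + ∑ i, b i := Finset.sum_add_distrib
      _ = 2 * t := by rw [← hsum_eq]; ring
    rw [h1] at hTV; linarith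
  set s := ∑ i ∈ Finset.univ.erase j, b i with hs
  set s' := ∑ i ∈ Finset.univ.erase j, a i with hs'
  have hs0 : 0 ≤ s := Finset.sum_nonneg fun i _ => hb0 i
  have hs'0 : 0 ≤ s' := Finset.sum_nonneg fun i _ => ha0 i
  have hs't : s' ≤ t := Finset.sum_le_sum_of_subset_of_nonneg (Finset.subset_univ _)
    (fun i _ _ => ha0 i)
  have hs'ε : s' ≤ ε := le_trans hs't ht_ε
  have hqjs : q j + s ≤ 1 := by
    have h1 : s ≤ ∑ i ∈ Finset.univ.erase j, q i :=
      Finset.sum_le_sum fun i _ => by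
        have := hc0 i; have := hcb i; linarith
    have h2 : ∑ i ∈ Finset.univ.erase j, q i + q j = 1 := by
      rw [Finset.sum_erase_add _ _ (Finset.mem_univ j)]; exact hq1
    linarith
  have e1 : s + b j = ∑ i, b i := Finset.sum_erase_add _ _ (Finset.mem_univ j)
  have e2 : s' + a j = ∑ i, a i := Finset.sum_erase_add _ _ (Finset.mem_univ j)
  have hqp : q j + s = p j + s' := by
    have h1 := hca j; have h2 := hcb j
    have h3 : (∑ i, b i) = t := hsum_eq.symm
    linarith
  -- Step 3: putting all the `b`-mass on top of the maximal coordinate `j`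
  have step3 : ∀ A : Finset (Fin d), A ⊆ Finset.univ.erase j →
      ∑ i ∈ A, f (q i) + f (q j) ≤ ∑ i ∈ A, f (c i) + f (q j + ∑ i ∈ A, b i) := by
    intro A
    induction A using Finset.induction_on with
    | empty => intro _; simp
    | @insert i0 A hi0 ih =>
      intro hsub
      have hAsub : A ⊆ Finset.univ.erase j := (Finset.insert_subset_iff.mp hsub).2
      have ih' := ih hAsub
      have hSA0 : 0 ≤ ∑ i ∈ A, b i := Finset.sum_nonneg fun i _ => hb0 i
      have hbound : ∑ i ∈ insert i0 A, b i ≤ s :=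
        Finset.sum_le_sum_of_subset_of_nonneg hsub fun i _ _ => hb0 i
      rw [Finset.sum_insert hi0] at hbound
      have hinc := conv_inc hf (hc0 i0)
        (show c i0 ≤ q j + ∑ i ∈ A, b i by
          have h1 : c i0 ≤ q i0 := min_le_right _ _
          have h2 := hj' i0
          linarith)
        (hb0 i0)
        (show (q j + ∑ i ∈ A, b i) + b i0 ≤ 1 by linarith)
      rw [hcb i0] at hinc
      rw [Finset.sum_insert hi0, Finset.sum_insert hi0, Finset.sum_insert hi0]
      have harg : q j + (b i0 + ∑ i ∈ A, b i) = (q j + ∑ i ∈ A, b i) + b i0 := by ring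
      rw [harg]
      linarith
  have step3' : ∑ i, f (q i) ≤ ∑ i ∈ Finset.univ.erase j, f (c i) + f (q j + s) := by
    have h := step3 _ (Finset.Subset.refl _)
    have e : ∑ i ∈ Finset.univ.erase j, f (q i) + f (q j) = ∑ i, f (q i) :=
      Finset.sum_erase_add _ _ (Finset.mem_univ j)
    rw [← hs] at h
    linarith
  -- Step 4: comparing with the extremal chords
  have step4 : ∀ i ∈ Finset.univ.erase j, f (c i) ≤ f (p i) - f (a i) := by
    intro i _
    have hinc := conv_inc hf (le_refl (0:ℝ)) (hc0 i) (ha0 i)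
      (show c i + a i ≤ 1 by rw [hca i]; exact hp1' i)
    rw [zero_add, hf0, hca i] at hinc
    linarith
  have hsum4 : ∑ i ∈ Finset.univ.erase j, f (c i)
      ≤ ∑ i ∈ Finset.univ.erase j, (f (p i) - f (a i)) := Finset.sum_le_sum step4
  have hpj1 : p j + s' ≤ 1 := by rw [← hqp]; exact hqjs
  have step4j : f (q j + s) ≤ f (p j) - f (1 - s') := by
    have hinc := conv_inc hf (hp0 j) (show p j ≤ 1 - s' by linarith) hs'0
      (show (1 - s') + s' ≤ 1 by linarith)
    have e3 : (1 - s') + s' = 1 := by ring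
    rw [e3, hf1, ← hqp] at hinc
    linarith
  have main1 : ∑ i, f (q i) - ∑ i, f (p i)
      ≤ -(∑ i ∈ Finset.univ.erase j, f (a i)) - f (1 - s') := by
    have e4 : ∑ i ∈ Finset.univ.erase j, f (p i) + f (p j) = ∑ i, f (p i) :=
      Finset.sum_erase_add _ _ (Finset.mem_univ j)
    have e5 : ∑ i ∈ Finset.univ.erase j, (f (p i) - f (a i))
        = ∑ i ∈ Finset.univ.erase j, f (p i) - ∑ i ∈ Finset.univ.erase j, f (a i) :=
      Finset.sum_sub_distrib _ _
    linarith
  -- Step 5: Jensen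
  have hcard : ((Finset.univ.erase j).card : ℝ) = (d:ℝ) - 1 := by
    rw [Finset.card_erase_of_mem (Finset.mem_univ j), Finset.card_univ, Fintype.card_fin]
    have h1 : (1:ℕ) ≤ d := by omega
    push_cast [Nat.cast_sub h1]
    ring
  have hjensen : ((d:ℝ) - 1) * f (s' / ((d:ℝ) - 1)) ≤ ∑ i ∈ Finset.univ.erase j, f (a i) := by
    have h := hf.map_sum_le (t := Finset.univ.erase j)
      (w := fun _ => 1 / ((d:ℝ) - 1)) (p := a)
      (fun i _ => by positivity)
      (by rw [Finset.sum_const, nsmul_eq_mul, hcard]; field_simp)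
      (fun i _ => ⟨ha0 i, by
        have h1 := hca i; have h2 := hc0 i; have h3 := hp1' i; linarith⟩)
    simp only [smul_eq_mul, ← Finset.mul_sum] at h
    rw [show (1 / ((d:ℝ) - 1)) * s' = s' / ((d:ℝ) - 1) by ring] at h
    calc ((d:ℝ) - 1) * f (s' / ((d:ℝ) - 1))
        ≤ ((d:ℝ) - 1) * ((1 / ((d:ℝ) - 1)) * ∑ i ∈ Finset.univ.erase j, f (a i)) :=
          mul_le_mul_of_nonneg_left h hd1.le
      _ = ∑ i ∈ Finset.univ.erase j, f (a i) := by field_simp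
  -- Step 6: monotonicity of the bound in s'
  have hGmax : (d:ℝ) * f (1/(d:ℝ)) ≤ f (1 - s') + ((d:ℝ) - 1) * f (s' / ((d:ℝ) - 1)) := by
    have hm1 : (1 - s') ∈ Set.Icc (0:ℝ) 1 := ⟨by linarith, by linarith⟩
    have hm2 : s' / ((d:ℝ) - 1) ∈ Set.Icc (0:ℝ) 1 :=
      ⟨by positivity, by rw [div_le_one hd1]; linarith⟩
    have h := hf.2 hm1 hm2 (le_of_lt hdinv)
      (by positivity : (0:ℝ) ≤ ((d:ℝ) - 1)/(d:ℝ)) (by field_simp; ring)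
    simp only [smul_eq_mul] at h
    have e6 : (1/(d:ℝ)) * (1 - s') + (((d:ℝ) - 1)/(d:ℝ)) * (s' / ((d:ℝ) - 1)) = 1/(d:ℝ) := by
      field_simp; ring
    rw [e6] at h
    have h2 := mul_le_mul_of_nonneg_left h hdpos.le
    have e7 : (d:ℝ) * ((1/(d:ℝ)) * f (1 - s') + (((d:ℝ) - 1)/(d:ℝ)) * f (s' / ((d:ℝ) - 1)))
        = f (1 - s') + ((d:ℝ) - 1) * f (s' / ((d:ℝ) - 1)) := by
      field_simp
    rw [e7] at h2
    exact h2
  have hmono : f (1 - ε) + ((d:ℝ) - 1) * f (ε / ((d:ℝ) - 1))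
      ≤ f (1 - s') + ((d:ℝ) - 1) * f (s' / ((d:ℝ) - 1)) := by
    set T : ℝ := 1 - 1/(d:ℝ) with hT
    rcases lt_or_ge s' T with hsT | hsT
    · set lam := (T - ε)/(T - s') with hlam
      have hTs : 0 < T - s' := by linarith
      have hlam0 : 0 ≤ lam := div_nonneg (by linarith) hTs.le
      have hlam1 : lam ≤ 1 := (div_le_one hTs).mpr (by linarith)
      have hcan : lam * (T - s') = T - ε := div_mul_cancel₀ _ (ne_of_gt hTs)
      have hTmem : (1 - T) ∈ Set.Icc (0:ℝ) 1 := ⟨by rw [hT]; linarith, by rw [hT]; linarith⟩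
      have hm1 : (1 - s') ∈ Set.Icc (0:ℝ) 1 := ⟨by linarith, by linarith⟩
      have hm2 : s' / ((d:ℝ) - 1) ∈ Set.Icc (0:ℝ) 1 :=
        ⟨by positivity, by rw [div_le_one hd1]; linarith⟩
      have hm3 : T / ((d:ℝ) - 1) ∈ Set.Icc (0:ℝ) 1 :=
        ⟨by rw [hT]; exact div_nonneg (by linarith) hd1.le, by rw [div_le_one hd1, hT]; linarith⟩
      have c1 := hf.2 hm1 hTmem hlam0 (by linarith : (0:ℝ) ≤ 1 - lam) (by ring)
      have c2 := hf.2 hm2 hm3 hlam0 (by linarith : (0:ℝ) ≤ 1 - lam) (by ring)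
      simp only [smul_eq_mul] at c1 c2
      have e8 : lam * (1 - s') + (1 - lam) * (1 - T) = 1 - ε := by linear_combination hcan
      have e9 : lam * (s' / ((d:ℝ) - 1)) + (1 - lam) * (T / ((d:ℝ) - 1))
          = ε / ((d:ℝ) - 1) := by
        linear_combination (-(1/((d:ℝ)-1))) * hcan
      rw [e8] at c1
      rw [e9] at c2
      have eT1 : 1 - T = 1/(d:ℝ) := by rw [hT]; ring
      have eT2 : T / ((d:ℝ) - 1) = 1/(d:ℝ) := by
        rw [hT, div_eq_div_iff (ne_of_gt hd1) (ne_of_gt hdpos)]; field_simp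
      rw [eT1] at c1
      rw [eT2] at c2
      have c2' := mul_le_mul_of_nonneg_left c2 hd1.le
      have hg1 := mul_le_mul_of_nonneg_left hGmax (by linarith : (0:ℝ) ≤ 1 - lam)
      linarith [c1, c2', hg1]
    · have h1 : s' = ε := by linarith
      rw [h1]
  linarith [main1, hjensen, hmono]

/-- Uniform continuity bound for the entropy `S_f(p) = -∑ f(pᵢ)` induced by a
strictly convex `f : [0,1] → ℝ` with `f(0) = f(1) = 0`. -/
theorem stmt14 {d : ℕ} (hd : 2 ≤ d) (f : ℝ → ℝ)
    (hf : StrictConvexOn ℝ (Set.Icc (0 : ℝ) 1) f) (hf0 : f 0 = 0) (hf1 : f 1 = 0)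
    (S : (Fin d → ℝ) → ℝ) (hS : ∀ p, S p = -∑ i, f (p i))
    (ε : ℝ) (hε0 : 0 ≤ ε) (hε1 : ε ≤ 1 - 1 / d)
    (p q : Fin d → ℝ)
    (hp : (∀ i, 0 ≤ p i) ∧ ∑ i, p i = 1) (hq : (∀ i, 0 ≤ q i) ∧ ∑ i, q i = 1)
    (hTV : (1 / 2) * ∑ i, |p i - q i| ≤ ε) :
    |S p - S q| ≤ -f (1 - ε) - ((d : ℝ) - 1) * f (ε / ((d : ℝ) - 1)) := by
  have h1 := key_bound hd f hf.convexOn hf0 hf1 ε hε0 hε1 p q hp.1 hp.2 hq.1 hq.2 hTV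
  have h2 := key_bound hd f hf.convexOn hf0 hf1 ε hε0 hε1 q p hq.1 hq.2 hp.1 hp.2
    (by simpa [abs_sub_comm] using hTV)
  rw [hS p, hS q, abs_le]
  constructor <;> linarith
end

section
/- For bipartite pure states the concurrence, viewed as C(ρ) = √(2(1 − tr ρ²)) of the reduced density matrix ρ, satisfies: for density matrices ρ, σ on a d-dimensional Hilbert space with trace distance (1/2)‖ρ−σ‖₁ ≤ ε ≤ 1 − 1/d, |C(ρ) − C(σ)| ≤ √(2(1 − (1−ε)² − ε²/(d−1))). -/
open Finset Real Matrix
open scoped ComplexOrder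

section aux

lemma vec_bound {d : ℕ} (hd : 2 ≤ d) (p q : Fin d → ℝ)
    (hp : ∀ i, 0 ≤ p i) (hq : ∀ i, 0 ≤ q i)
    (sp : ∑ i, p i = 1) (sq' : ∑ i, q i = 1)
    (ε : ℝ) (hε0 : 0 ≤ ε) (hε1 : ε ≤ 1 - 1 / d)
    (ht : (1 / 2) * ∑ i, |p i - q i| ≤ ε) :
    ∑ i, (p i - q i) * (p i + q i) ≤ 2 * ε - ε ^ 2 * d / ((d : ℝ) - 1) := by
  have hd' : (2:ℝ) ≤ (d:ℝ) := by exact_mod_cast hd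
  have hD0 : (0:ℝ) < (d:ℝ) - 1 := by linarith
  obtain ⟨u, v, hu0, hv0, hcase⟩ : ∃ u v : Fin d → ℝ, (∀ i, 0 ≤ u i) ∧ (∀ i, 0 ≤ v i) ∧
      (∀ i, (u i = p i - q i ∧ v i = 0) ∨ (u i = 0 ∧ v i = q i - p i)) := by
    refine ⟨fun i => max (p i - q i) 0, fun i => max (q i - p i) 0,
      fun i => le_max_right _ _, fun i => le_max_right _ _, fun i => ?_⟩
    rcases le_total (q i) (p i) with h | h
    · exact Or.inl ⟨max_eq_left (by linarith), max_eq_right (by linarith)⟩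
    · exact Or.inr ⟨max_eq_right (by linarith), max_eq_left (by linarith)⟩
  have habs : ∀ i, |p i - q i| = u i + v i := by
    intro i
    rcases hcase i with ⟨h1, h2⟩ | ⟨h1, h2⟩
    · rw [h2, add_zero, h1]
      exact abs_of_nonneg (h1 ▸ hu0 i)
    · rw [h1, zero_add, h2, abs_of_nonpos (by linarith [h2 ▸ hv0 i])]; ring
  have hsub : ∀ i, p i - q i = u i - v i := by
    intro i
    rcases hcase i with ⟨h1, h2⟩ | ⟨h1, h2⟩ <;> rw [h1, h2] <;> ring
  set t : ℝ := ∑ i, u i with htdef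
  have ht0 : 0 ≤ t := Finset.sum_nonneg (fun i _ => hu0 i)
  have hsum0 : ∑ i, (p i - q i) = 0 := by
    rw [Finset.sum_sub_distrib, sp, sq']; ring
  have hvsum : ∑ i, v i = t := by
    have h1 : ∑ i, (u i - v i) = 0 := by
      rw [← Finset.sum_congr rfl (fun i _ => (hsub i))] ; exact hsum0
    rw [Finset.sum_sub_distrib] at h1; linarith
  have htε : t ≤ ε := by
    have h2 : ∑ i, |p i - q i| = 2 * t := by
      rw [Finset.sum_congr rfl (fun i _ => habs i), Finset.sum_add_distrib, hvsum]; ring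
    rw [h2] at ht; linarith
  have hterm : ∀ i, (p i - q i) * (p i + q i)
      = u i * (2 * p i - u i) - v i * (2 * p i + v i) := by
    intro i
    rcases hcase i with ⟨h1, h2⟩ | ⟨h1, h2⟩ <;> rw [h1, h2] <;> ring
  rw [Finset.sum_congr rfl (fun i _ => hterm i), Finset.sum_sub_distrib]
  have hup : ∀ i, u i ≤ p i := by
    intro i
    rcases hcase i with ⟨h1, h2⟩ | ⟨h1, h2⟩
    · rw [h1]; linarith [hq i]
    · rw [h1]; exact hp i
  have hut : ∀ i, u i ≤ t :=
    fun i => Finset.single_le_sum (fun j _ => hu0 j) (Finset.mem_univ i)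
  have hupper : ∑ i, u i * (2 * p i - u i) ≤ 2 * t - t ^ 2 := by
    have hstep : ∀ i, u i * (2 * p i - u i) ≤ u i * u i + 2 * t * (p i - u i) := by
      intro i
      have h1 : u i * (p i - u i) ≤ t * (p i - u i) :=
        mul_le_mul_of_nonneg_right (hut i) (by linarith [hup i])
      nlinarith [hu0 i]
    calc ∑ i, u i * (2 * p i - u i) ≤ ∑ i, (u i * u i + 2 * t * (p i - u i)) :=
          Finset.sum_le_sum (fun i _ => hstep i)
      _ = ∑ i, u i * u i + 2 * t * (1 - t) := by
          rw [Finset.sum_add_distrib, ← Finset.mul_sum, Finset.sum_sub_distrib, sp]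
      _ ≤ t * t + 2 * t * (1 - t) := by
          have h3 : ∑ i, u i * u i ≤ ∑ i, t * u i :=
            Finset.sum_le_sum (fun i _ => mul_le_mul_of_nonneg_right (hut i) (hu0 i))
          rw [← Finset.mul_sum] at h3; nlinarith
      _ = 2 * t - t ^ 2 := by ring
  have hlower : t ^ 2 / ((d:ℝ) - 1) ≤ ∑ i, v i * (2 * p i + v i) := by
    have hsumnn : (0:ℝ) ≤ ∑ i, v i * (2 * p i + v i) :=
      Finset.sum_nonneg (fun i _ => mul_nonneg (hv0 i) (by linarith [hp i, hv0 i]))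
    rcases eq_or_lt_of_le ht0 with h0 | h0
    · rw [← h0]; norm_num; exact hsumnn
    · have hex : ∃ j, 0 < u j := by
        by_contra hcon
        push_neg at hcon
        have h4 : t ≤ 0 := Finset.sum_nonpos (fun i _ => hcon i)
        linarith
      obtain ⟨j, hj⟩ := hex
      have hvj : v j = 0 := by
        rcases hcase j with ⟨h1, h2⟩ | ⟨h1, h2⟩
        · exact h2
        · rw [h1] at hj; exact absurd hj (lt_irrefl 0)
      have h1 : ∑ i ∈ Finset.univ.erase j, v i = t := by
        rw [← hvsum, ← Finset.add_sum_erase _ _ (Finset.mem_univ j), hvj, zero_add]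
      have h2 := sq_sum_le_card_mul_sum_sq (s := Finset.univ.erase j) (f := v)
      rw [h1] at h2
      have hcard : (((Finset.univ : Finset (Fin d)).erase j).card : ℝ) = (d:ℝ) - 1 := by
        rw [Finset.card_erase_of_mem (Finset.mem_univ j)]
        have h5 : 1 ≤ d := by omega
        simp [Nat.cast_sub h5]
      have h3 : ∑ i ∈ Finset.univ.erase j, v i ^ 2 ≤ ∑ i, v i * (2 * p i + v i) := by
        calc ∑ i ∈ Finset.univ.erase j, v i ^ 2 ≤ ∑ i, v i ^ 2 :=
              Finset.sum_le_sum_of_subset_of_nonneg (Finset.subset_univ _)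
                (fun i _ _ => sq_nonneg _)
          _ ≤ ∑ i, v i * (2 * p i + v i) := by
              apply Finset.sum_le_sum; intro i _
              nlinarith [mul_nonneg (hv0 i) (hp i)]
      rw [div_le_iff₀ hD0]
      calc t^2 ≤ (((Finset.univ : Finset (Fin d)).erase j).card : ℝ)
            * ∑ i ∈ Finset.univ.erase j, v i ^ 2 := h2
        _ = ((d:ℝ) - 1) * ∑ i ∈ Finset.univ.erase j, v i ^ 2 := by rw [hcard]
        _ ≤ ((d:ℝ) - 1) * ∑ i, v i * (2 * p i + v i) :=
            mul_le_mul_of_nonneg_left h3 (le_of_lt hD0)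
        _ = (∑ i, v i * (2 * p i + v i)) * ((d:ℝ) - 1) := by ring
  have hεD : ε * (d:ℝ) ≤ (d:ℝ) - 1 := by
    have h := mul_le_mul_of_nonneg_right hε1 (show (0:ℝ) ≤ (d:ℝ) by linarith)
    have h2 : (1 - 1/(d:ℝ)) * (d:ℝ) = (d:ℝ) - 1 := by field_simp
    linarith
  have hid : ∀ s : ℝ, s^2 + s^2/((d:ℝ)-1) = s^2*(d:ℝ)/((d:ℝ)-1) := by
    intro s; field_simp; ring
  have h2 : (ε^2 - t^2) * (d:ℝ) / ((d:ℝ)-1) ≤ 2 * (ε - t) := by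
    rw [div_le_iff₀ hD0]
    have hin : 0 ≤ 2*((d:ℝ)-1) - (d:ℝ)*(ε+t) := by
      nlinarith [mul_le_mul_of_nonneg_left htε (show (0:ℝ) ≤ (d:ℝ) by linarith)]
    nlinarith [mul_nonneg (show 0 ≤ ε - t by linarith) hin]
  have h4 : ε^2*(d:ℝ)/((d:ℝ)-1) - t^2*(d:ℝ)/((d:ℝ)-1) = (ε^2 - t^2)*(d:ℝ)/((d:ℝ)-1) := by
    ring
  linarith [hupper, hlower, hid t, hid ε]

variable {d : ℕ}

lemma diag_re_nonneg {M : Matrix (Fin d) (Fin d) ℂ} (hM : M.PosSemidef) (i : Fin d) :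
    0 ≤ (M i i).re := by
  have h := hM.re_dotProduct_nonneg (Pi.single i 1)
  simpa [dotProduct, mulVec, Pi.single_apply, Finset.sum_ite_eq] using h

lemma trace_conj {V : Matrix (Fin d) (Fin d) ℂ} (hV2 : V * star V = 1)
    (M : Matrix (Fin d) (Fin d) ℂ) : (star V * (M * V)).trace = M.trace := by
  rw [Matrix.trace_mul_comm, Matrix.mul_assoc, hV2, Matrix.mul_one]

lemma trace_eq_sum_eig {M : Matrix (Fin d) (Fin d) ℂ} (hM : M.IsHermitian) :
    M.trace = ∑ i, (hM.eigenvalues i : ℂ) := by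
  set V := (hM.eigenvectorUnitary : Matrix (Fin d) (Fin d) ℂ) with hVdef
  have hV1 : star V * V = 1 := (Matrix.mem_unitaryGroup_iff').mp hM.eigenvectorUnitary.2
  conv_lhs => rw [hM.spectral_theorem, Unitary.conjStarAlgAut_apply]
  rw [Matrix.trace_mul_comm, ← Matrix.mul_assoc, hV1, Matrix.one_mul, Matrix.trace_diagonal]
  rfl

lemma trace_sq_eq {M : Matrix (Fin d) (Fin d) ℂ} (hM : M.IsHermitian) :
    (M * M).trace = ∑ i, ((hM.eigenvalues i : ℂ))^2 := by
  set V := (hM.eigenvectorUnitary : Matrix (Fin d) (Fin d) ℂ) with hVdef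
  have hV1 : star V * V = 1 := (Matrix.mem_unitaryGroup_iff').mp hM.eigenvectorUnitary.2
  have hspec := hM.spectral_theorem
  set D := Matrix.diagonal (RCLike.ofReal ∘ hM.eigenvalues : Fin d → ℂ) with hD
  have h1 : M * M = V * (D * D) * star V := by
    rw [hspec]
    calc V * D * star V * (V * D * star V) = V * D * (star V * V) * D * star V := by
          simp only [Matrix.mul_assoc]
      _ = V * (D * D) * star V := by rw [hV1]; simp only [Matrix.mul_one, Matrix.mul_assoc]
  rw [h1, Matrix.trace_mul_comm, ← Matrix.mul_assoc, hV1, Matrix.one_mul, hD,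
    Matrix.diagonal_mul_diagonal, Matrix.trace_diagonal]
  simp [pow_two]

lemma purity_le_one {M : Matrix (Fin d) (Fin d) ℂ} (hM : M.PosSemidef)
    (htr : M.trace = 1) : ((M * M).trace).re ≤ 1 := by
  have h1 : ((M * M).trace).re = ∑ i, (hM.1.eigenvalues i)^2 := by
    rw [trace_sq_eq hM.1, Complex.re_sum]
    apply Finset.sum_congr rfl
    intro i _
    rw [← Complex.ofReal_pow]
    exact Complex.ofReal_re _
  have h2 : ∑ i, hM.1.eigenvalues i = 1 := by
    have h := trace_eq_sum_eig hM.1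
    rw [htr, ← Complex.ofReal_sum] at h
    exact_mod_cast h.symm
  rw [h1]
  calc ∑ i, (hM.1.eigenvalues i)^2 ≤ (∑ i, hM.1.eigenvalues i)^2 :=
        Finset.sum_sq_le_sq_sum_of_nonneg (fun i _ => hM.eigenvalues_nonneg i)
    _ = 1 := by rw [h2]; norm_num

lemma trace_diag_mul (c : Fin d → ℝ) (M : Matrix (Fin d) (Fin d) ℂ) :
    ((Matrix.diagonal (fun i => (c i : ℂ)) * M).trace).re = ∑ i, c i * (M i i).re := by
  rw [Matrix.trace, Complex.re_sum]
  apply Finset.sum_congr rfl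
  intro i _
  simp [Matrix.diag, Matrix.diagonal_mul]

lemma sqrt_diff_le {x y B : ℝ} (hx : x ≤ 1) (hy : y ≤ 1) (hB : |x - y| ≤ B) :
    |Real.sqrt (2*(1-x)) - Real.sqrt (2*(1-y))| ≤ Real.sqrt (2*B) := by
  have hB0 : 0 ≤ B := le_trans (abs_nonneg _) hB
  have key : ∀ a b : ℝ, a ≤ 1 → b ≤ 1 → |a - b| ≤ B → a ≤ b →
      Real.sqrt (2*(1-a)) - Real.sqrt (2*(1-b)) ≤ Real.sqrt (2*B) := by
    intro a b ha hb hab hle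
    have h1 : 2*(1-a) ≤ 2*(1-b) + 2*B := by
      have : b - a ≤ B := le_trans (le_abs_self _) (by rwa [abs_sub_comm] at hab)
      linarith
    have h2 : Real.sqrt (2*(1-a)) ≥ 0 := Real.sqrt_nonneg _
    have h3 : Real.sqrt (2*(1-b) + 2*B) ≤ Real.sqrt (2*(1-b)) + Real.sqrt (2*B) := by
      have hb0 : 0 ≤ 2*(1-b) := by linarith
      have hB0' : 0 ≤ 2*B := by linarith
      have s1 := Real.sqrt_nonneg (2*(1-b))
      have s2 := Real.sqrt_nonneg (2*B)
      have e1 := Real.sq_sqrt hb0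
      have e2 := Real.sq_sqrt hB0'
      have h5 : 2*(1-b) + 2*B ≤ (Real.sqrt (2*(1-b)) + Real.sqrt (2*B))^2 := by
        nlinarith [mul_nonneg s1 s2]
      calc Real.sqrt (2*(1-b) + 2*B) ≤ Real.sqrt ((Real.sqrt (2*(1-b)) + Real.sqrt (2*B))^2) :=
            Real.sqrt_le_sqrt h5
        _ = Real.sqrt (2*(1-b)) + Real.sqrt (2*B) := Real.sqrt_sq (by positivity)
    have h4 : Real.sqrt (2*(1-b)) ≤ Real.sqrt (2*(1-b) + 2*B) := Real.sqrt_le_sqrt (by linarith)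
    linarith [Real.sqrt_le_sqrt h1, h3]
  rcases le_total x y with h | h
  · rw [abs_of_nonneg (by
      have := Real.sqrt_le_sqrt (show 2*(1-y) ≤ 2*(1-x) by linarith); linarith)]
    exact key x y hx hy hB h
  · rw [abs_of_nonpos (by
      have := Real.sqrt_le_sqrt (show 2*(1-x) ≤ 2*(1-y) by linarith); linarith)]
    have hB' : |y - x| ≤ B := by rwa [abs_sub_comm]
    have h5 := key y x hy hx hB' h
    linarith

end aux

/-- Continuity bound for the concurrence `C(ρ) = √(2(1 - tr ρ²))` of density
matrices, in trace distance (expressed via eigenvalues of `ρ - σ`). -/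
theorem stmt15 {d : ℕ} (hd : 2 ≤ d) (ρ σ : Matrix (Fin d) (Fin d) ℂ)
    (hρ : ρ.PosSemidef) (hσ : σ.PosSemidef)
    (hρtr : ρ.trace = 1) (hσtr : σ.trace = 1)
    (C : Matrix (Fin d) (Fin d) ℂ → ℝ)
    (hC : ∀ X, C X = Real.sqrt (2 * (1 - ((X * X).trace).re)))
    (ε : ℝ) (hε0 : 0 ≤ ε) (hε1 : ε ≤ 1 - 1 / d)
    (hTD : (1 / 2) * ∑ i, |(hρ.1.sub hσ.1).eigenvalues i| ≤ ε) :
    |C ρ - C σ| ≤ Real.sqrt (2 * (1 - (1 - ε) ^ 2 - ε ^ 2 / ((d : ℝ) - 1))) := by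
  have hd' : (2:ℝ) ≤ (d:ℝ) := by exact_mod_cast hd
  have hD0 : (0:ℝ) < (d:ℝ) - 1 := by linarith
  have hΔ : (ρ - σ).IsHermitian := hρ.1.sub hσ.1
  set μ : Fin d → ℝ := hΔ.eigenvalues with hμdef
  set V := (hΔ.eigenvectorUnitary : Matrix (Fin d) (Fin d) ℂ) with hVdef
  have hV1 : star V * V = 1 := (Matrix.mem_unitaryGroup_iff').mp hΔ.eigenvectorUnitary.2
  have hV2 : V * star V = 1 := (Matrix.mem_unitaryGroup_iff).mp hΔ.eigenvectorUnitary.2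
  have key0 : star V * (ρ - σ) * V = Matrix.diagonal (fun i => (μ i : ℂ)) :=
    by have h := hΔ.conjStarAlgAut_star_eigenvectorUnitary
       rw [Unitary.conjStarAlgAut_star_apply] at h; exact h
  set ρ' := star V * ρ * V with hρ'def
  set σ' := star V * σ * V with hσ'def
  have hρ'psd : ρ'.PosSemidef := by
    rw [hρ'def, Matrix.star_eq_conjTranspose]
    exact hρ.conjTranspose_mul_mul_same V
  have hσ'psd : σ'.PosSemidef := by
    rw [hσ'def, Matrix.star_eq_conjTranspose]
    exact hσ.conjTranspose_mul_mul_same V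
  set p : Fin d → ℝ := fun i => (ρ' i i).re with hpdef
  set q : Fin d → ℝ := fun i => (σ' i i).re with hqdef
  have hp : ∀ i, 0 ≤ p i := fun i => diag_re_nonneg hρ'psd i
  have hq : ∀ i, 0 ≤ q i := fun i => diag_re_nonneg hσ'psd i
  have hptr : ∑ i, p i = 1 := by
    have h1 : ρ'.trace = 1 := by
      rw [hρ'def, Matrix.mul_assoc, trace_conj hV2, hρtr]
    have h2 := congrArg Complex.re h1
    rw [Matrix.trace, Complex.re_sum] at h2
    simpa [Matrix.diag] using h2
  have hqtr : ∑ i, q i = 1 := by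
    have h1 : σ'.trace = 1 := by
      rw [hσ'def, Matrix.mul_assoc, trace_conj hV2, hσtr]
    have h2 := congrArg Complex.re h1
    rw [Matrix.trace, Complex.re_sum] at h2
    simpa [Matrix.diag] using h2
  have hdiff : ρ' - σ' = Matrix.diagonal (fun i => (μ i : ℂ)) := by
    rw [hρ'def, hσ'def, ← key0, Matrix.mul_sub, Matrix.sub_mul]
  have hpq : ∀ i, p i - q i = μ i := by
    intro i
    have h := congrFun (congrFun hdiff i) i
    rw [Matrix.sub_apply, Matrix.diagonal_apply_eq] at h
    have h2 := congrArg Complex.re h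
    simpa [hpdef, hqdef] using h2
  -- trace distance hypothesis in terms of p, q
  have hTD' : (1 / 2) * ∑ i, |p i - q i| ≤ ε := by
    have h1 : ∀ i, |p i - q i| = |μ i| := fun i => by rw [hpq i]
    rw [Finset.sum_congr rfl (fun i _ => h1 i)]
    exact hTD
  have hTD'' : (1 / 2) * ∑ i, |q i - p i| ≤ ε := by
    have h1 : ∀ i, |q i - p i| = |p i - q i| := fun i => abs_sub_comm _ _
    rw [Finset.sum_congr rfl (fun i _ => h1 i)]
    exact hTD'
  -- the purity difference identity
  set x : ℝ := ((ρ * ρ).trace).re with hxdef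
  set y : ℝ := ((σ * σ).trace).re with hydef
  have hV2' : ∀ M : Matrix (Fin d) (Fin d) ℂ, V * (star V * M) = M := fun M => by
    rw [← Matrix.mul_assoc, hV2, Matrix.one_mul]
  have hconjsq : ∀ M : Matrix (Fin d) (Fin d) ℂ,
      ((star V * M * V) * (star V * M * V)).trace = (M * M).trace := by
    intro M
    have h1 : (star V * M * V) * (star V * M * V) = star V * ((M * M) * V) := by
      simp only [Matrix.mul_assoc]
      rw [hV2' (M * V)]
    rw [h1, trace_conj hV2]
  have hB : ((ρ' - σ') * (ρ' + σ')).trace = (ρ' * ρ').trace - (σ' * σ').trace := by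
    rw [Matrix.sub_mul, Matrix.mul_add, Matrix.mul_add, Matrix.trace_sub, Matrix.trace_add,
      Matrix.trace_add, Matrix.trace_mul_comm σ' ρ']
    ring
  have hC' : ((ρ' - σ') * (ρ' + σ')).trace.re = ∑ i, (p i - q i) * (p i + q i) := by
    rw [hdiff, trace_diag_mul]
    apply Finset.sum_congr rfl
    intro i _
    rw [Matrix.add_apply, Complex.add_re, hpq i]
  have hxy : x - y = ∑ i, (p i - q i) * (p i + q i) := by
    rw [hxdef, hydef, ← hconjsq ρ, ← hconjsq σ, ← hρ'def, ← hσ'def, ← Complex.sub_re, ← hB, hC']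
  -- the two-sided bound
  have hbound1 : x - y ≤ 2 * ε - ε ^ 2 * d / ((d : ℝ) - 1) := by
    rw [hxy]
    exact vec_bound hd p q hp hq hptr hqtr ε hε0 hε1 hTD'
  have hbound2 : y - x ≤ 2 * ε - ε ^ 2 * d / ((d : ℝ) - 1) := by
    have h1 := vec_bound hd q p hq hp hqtr hptr ε hε0 hε1 hTD''
    have h2 : ∑ i, (q i - p i) * (q i + p i) = -(x - y) := by
      rw [hxy, ← Finset.sum_neg_distrib]
      apply Finset.sum_congr rfl
      intro i _
      ring
    rw [h2] at h1
    linarith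
  have hBeq : 2 * ε - ε ^ 2 * d / ((d : ℝ) - 1)
      = 1 - (1 - ε) ^ 2 - ε ^ 2 / ((d : ℝ) - 1) := by
    field_simp
    ring
  have habsxy : |x - y| ≤ 1 - (1 - ε) ^ 2 - ε ^ 2 / ((d : ℝ) - 1) := by
    rw [← hBeq]
    rw [abs_sub_le_iff]
    exact ⟨hbound1, hbound2⟩
  have hx1 : x ≤ 1 := purity_le_one hρ hρtr
  have hy1 : y ≤ 1 := purity_le_one hσ hσtr
  rw [hC ρ, hC σ]
  exact sqrt_diff_le hx1 hy1 habsxy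
end

section
/- For d ≥ 3 and x = 0, y = (d−2)^{−(α−1)/α}, z = (1−y)/(d−2) with α > 1, the probability vector r = (0, z, ..., z, y) satisfies Γ_{H_α}(r) ≥ (α/(α−1))·(d−2)^{1−1/α}/(2 ln 2), where Γ_{H_α}(r) = (α/(α−1))·(1/ln 2)·(r_+^{α−1} − r_−^{α−1})/(Σ_i r_i^α) with r_+ = y the largest and r_− = 0 the smallest entry. Consequently any Lipschitz constant of H_α with respect to TV distance is at least (α/(α−1))·(d−2)^{1−1/α}/(2 ln 2). -/
open Finset Real

lemma sum_tri {d : ℕ} (hd : 3 ≤ d) (A B C : ℝ) :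
    ∑ i : Fin d, (if (i:ℕ) = 0 then A else if (i:ℕ) = d - 1 then B else C)
      = A + B + ((d:ℝ) - 2) * C := by
  have hne : (⟨0, by omega⟩ : Fin d) ≠ (⟨d-1, by omega⟩ : Fin d) := by
    simp [Fin.ext_iff]; omega
  rw [← Finset.sum_erase_add _ _ (Finset.mem_univ (⟨d-1, by omega⟩ : Fin d))]
  rw [← Finset.sum_erase_add _ _ (Finset.mem_erase.mpr ⟨hne, Finset.mem_univ _⟩)]
  have hcong : ∀ i ∈ ((Finset.univ.erase (⟨d-1, by omega⟩ : Fin d)).erase (⟨0, by omega⟩ : Fin d)),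
      (if (i:ℕ) = 0 then A else if (i:ℕ) = d - 1 then B else C) = C := by
    intro i hi
    simp only [Finset.mem_erase] at hi
    have h1 : (i:ℕ) ≠ 0 := fun h => hi.1 (Fin.ext h)
    have h2 : (i:ℕ) ≠ d - 1 := fun h => hi.2.1 (Fin.ext h)
    rw [if_neg h1, if_neg h2]
  rw [Finset.sum_congr rfl hcong, Finset.sum_const]
  have hcard : ((Finset.univ.erase (⟨d-1, by omega⟩ : Fin d)).erase (⟨0, by omega⟩ : Fin d)).card = d - 2 := by
    rw [Finset.card_erase_of_mem (Finset.mem_erase.mpr ⟨hne, Finset.mem_univ _⟩),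
      Finset.card_erase_of_mem (Finset.mem_univ _)]
    simp; omega
  have hd1 : ¬ (d - 1 = 0) := by omega
  have hd2 : ¬ ((0:ℕ) = d - 1) := by omega
  rw [hcard, nsmul_eq_mul]
  simp only [Fin.val_mk, if_neg hd1, if_neg hd2, if_true, ite_true, eq_self_iff_true]
  have : ((d - 2 : ℕ) : ℝ) = (d:ℝ) - 2 := by
    have h2 : (2:ℕ) ≤ d := by omega
    push_cast [h2]; ring
  rw [this]; ring


/-- Lower bound on `Γ_{H_α}` at the distribution `r = (0, z, …, z, y)` with
`y = (d-2)^{-(α-1)/α}`, `z = (1-y)/(d-2)`, and the resulting lower bound on any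
Lipschitz constant of the α-Rényi entropy w.r.t. total variation distance. -/
theorem stmt18 {d : ℕ} (hd : 3 ≤ d) (α : ℝ) (hα : 1 < α)
    (y z : ℝ)
    (hy : y = ((d : ℝ) - 2) ^ (-((α - 1) / α)))
    (hz : z = (1 - y) / ((d : ℝ) - 2))
    (r : Fin d → ℝ)
    (hr : r = fun i : Fin d =>
      if (i : ℕ) = 0 then 0 else if (i : ℕ) = d - 1 then y else z)
    (H : (Fin d → ℝ) → ℝ)
    (hH : ∀ p, H p = (1 / (1 - α)) * Real.logb 2 (∑ i, p i ^ α)) :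
    (α / (α - 1)) * (1 / Real.log 2) *
        ((y ^ (α - 1) - (0 : ℝ) ^ (α - 1)) / ∑ i, r i ^ α) ≥
      (α / (α - 1)) * ((d : ℝ) - 2) ^ (1 - 1 / α) / (2 * Real.log 2) ∧
    ∀ k : ℝ,
      (∀ p q : Fin d → ℝ,
        ((∀ i, 0 ≤ p i) ∧ ∑ i, p i = 1) → ((∀ i, 0 ≤ q i) ∧ ∑ i, q i = 1) →
        |H p - H q| ≤ k * ((1 / 2) * ∑ i, |p i - q i|)) →
      (α / (α - 1)) * ((d : ℝ) - 2) ^ (1 - 1 / α) / (2 * Real.log 2) ≤ k := by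
  set c : ℝ := (d:ℝ) - 2 with hc
  have hα0 : (0:ℝ) < α := by linarith
  have hα1 : (0:ℝ) < α - 1 := by linarith
  have hc1 : (1:ℝ) ≤ c := by
    have : (3:ℝ) ≤ (d:ℝ) := by exact_mod_cast hd
    simp [hc]; linarith
  have hc0 : (0:ℝ) < c := by linarith
  have hy0 : 0 < y := by rw [hy]; exact Real.rpow_pos_of_pos hc0 _
  have hy1 : y ≤ 1 := by
    rw [hy]
    exact Real.rpow_le_one_of_one_le_of_nonpos hc1 (by
      apply neg_nonpos_of_nonneg; positivity)
  have hz0 : 0 ≤ z := by rw [hz]; apply div_nonneg <;> linarith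
  have hlog2 : 0 < Real.log 2 := Real.log_pos (by norm_num)
  have hyp : ∀ t : ℝ, y ^ t = c ^ (-((α - 1) / α) * t) := by
    intro t
    rw [hy, ← Real.rpow_mul hc0.le]
  have e1 : c ^ (1 - 1/α) * y ^ α = y ^ (α - 1) := by
    rw [hyp, hyp, ← Real.rpow_add hc0]
    congr 1
    field_simp
    ring
  have e2 : c ^ (1 - 1/α) * (c * z ^ α) = y ^ (α - 1) * (1 - y) ^ α := by
    rw [hz, Real.div_rpow (by linarith) hc0.le, hyp]
    rw [show c ^ (1 - 1/α) * (c * ((1-y)^α / c^α)) = (1-y)^α * (c ^ (1-1/α) * c ^ (1:ℝ) / c ^ α) by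
      rw [Real.rpow_one]; ring]
    rw [← Real.rpow_add hc0, ← Real.rpow_sub hc0]
    rw [show -((α-1)/α) * (α-1) = 1 - 1/α + 1 - α by field_simp; ring]
    ring
  set S : ℝ := y ^ α + c * z ^ α with hS
  have hS0 : 0 < S := by
    have : 0 < y ^ α := Real.rpow_pos_of_pos hy0 _
    have h2 : 0 ≤ c * z ^ α := by positivity
    rw [hS]; linarith
  have hsumr : ∑ i, r i ^ α = S := by
    have h1 : ∀ i : Fin d, r i ^ α =
        (if (i:ℕ) = 0 then (0:ℝ)^α else if (i:ℕ) = d - 1 then y^α else z^α) := by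
      intro i; simp only [hr]; split_ifs <;> rfl
    rw [Finset.sum_congr rfl (fun i _ => h1 i), sum_tri hd,
      Real.zero_rpow (by linarith : α ≠ 0)]
    rw [hS]; ring
  have hzrp : (0:ℝ) ^ (α - 1) = 0 := Real.zero_rpow (by linarith)
  have hkey : c ^ (1 - 1/α) * S ≤ 2 * y ^ (α - 1) := by
    have h1y : (1 - y) ^ α ≤ 1 := by
      apply Real.rpow_le_one (by linarith) (by linarith) hα0.le
    have hyp0 : 0 < y ^ (α - 1) := Real.rpow_pos_of_pos hy0 _
    have := mul_le_mul_of_nonneg_left h1y hyp0.le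
    rw [hS]
    calc c ^ (1 - 1/α) * (y ^ α + c * z ^ α)
        = c ^ (1-1/α) * y ^ α + c ^ (1-1/α) * (c * z ^ α) := by ring
      _ = y ^ (α-1) + y ^ (α-1) * (1-y)^α := by rw [e1, e2]
      _ ≤ y ^ (α-1) + y ^ (α-1) * 1 := by linarith
      _ = 2 * y ^ (α-1) := by ring
  have hpos : 0 < (α / (α - 1)) * (1 / Real.log 2) := by positivity
  have part1 : (α / (α - 1)) * (1 / Real.log 2) *
        ((y ^ (α - 1) - (0 : ℝ) ^ (α - 1)) / ∑ i, r i ^ α) ≥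
      (α / (α - 1)) * c ^ (1 - 1 / α) / (2 * Real.log 2) := by
    rw [hsumr, hzrp, sub_zero]
    have h2 : c ^ (1 - 1/α) / 2 ≤ y ^ (α-1) / S := by
      rw [div_le_div_iff₀ (by norm_num) hS0]
      linarith
    have h3 := mul_le_mul_of_nonneg_left h2 hpos.le
    calc (α / (α - 1)) * c ^ (1 - 1 / α) / (2 * Real.log 2)
        = (α / (α - 1)) * (1 / Real.log 2) * (c ^ (1-1/α) / 2) := by ring
      _ ≤ (α / (α - 1)) * (1 / Real.log 2) * (y ^ (α-1) / S) := h3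
  refine ⟨part1, ?_⟩
  intro k hk
  set A : ℝ := c * z ^ α with hA
  set g : ℝ → ℝ := fun ε => ε ^ α + A + (y - ε) ^ α with hg
  have hg0 : g 0 = S := by
    simp only [hg, sub_zero, Real.zero_rpow (by linarith : α ≠ 0), hS, hA]
    ring
  have hd1 : HasDerivAt (fun ε : ℝ => ε ^ α) 0 0 := by
    have := Real.hasDerivAt_rpow_const (x := (0:ℝ)) (p := α) (Or.inr hα.le)
    simpa [hzrp] using this
  have hd2 : HasDerivAt (fun ε : ℝ => (y - ε) ^ α) (-(α * y ^ (α - 1))) 0 := by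
    have hsub : HasDerivAt (fun ε : ℝ => y - ε) (-1) 0 := (hasDerivAt_id 0).const_sub y
    have hout : HasDerivAt (fun x : ℝ => x ^ α) (α * y ^ (α - 1)) ((fun ε : ℝ => y - ε) 0) := by
      simpa using Real.hasDerivAt_rpow_const (x := y) (p := α) (Or.inl hy0.ne')
    have := hout.comp 0 hsub
    rw [show -(α * y ^ (α - 1)) = α * y ^ (α - 1) * -1 by ring]
    exact this
  have hgd : HasDerivAt g (-(α * y ^ (α - 1))) 0 := by
    have := (hd1.add_const A).add hd2
    rw [zero_add] at this
    exact this
  have hgne : g 0 ≠ 0 := by rw [hg0]; exact hS0.ne'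
  set Γ : ℝ := (α / (α - 1)) * (1 / Real.log 2) * ((y ^ (α - 1) - (0:ℝ) ^ (α - 1)) / S) with hΓ
  have hFd : HasDerivAt (fun ε => (1 / (1 - α)) * (Real.log (g ε) / Real.log 2)) Γ 0 := by
    have h := ((hgd.log hgne).div_const (Real.log 2)).const_mul (1 / (1 - α))
    have hΓeq : Γ = 1 / (1 - α) * (-(α * y ^ (α - 1)) / g 0 / Real.log 2) := by
      rw [hΓ, hg0, hzrp, sub_zero]
      have hα1' : (1:ℝ) - α ≠ 0 := by linarith
      field_simp
      ring
    rw [hΓeq]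
    exact h
  have hslope : Filter.Tendsto (slope (fun ε => (1 / (1 - α)) * (Real.log (g ε) / Real.log 2)) 0)
      (nhdsWithin 0 (Set.Ioi 0)) (nhds Γ) :=
    (hasDerivAt_iff_tendsto_slope.mp hFd).mono_left
      (nhdsWithin_mono 0 (fun x hx => ne_of_gt hx))
  have hev : ∀ᶠ ε in nhdsWithin (0:ℝ) (Set.Ioi 0),
      slope (fun ε => (1 / (1 - α)) * (Real.log (g ε) / Real.log 2)) 0 ε ≤ k := by
    filter_upwards [Ioo_mem_nhdsGT_of_mem (Set.mem_Ico.mpr ⟨le_refl (0:ℝ), hy0⟩)] with ε hε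
    obtain ⟨hε0, hεy⟩ := hε
    set q : Fin d → ℝ := fun i =>
      if (i:ℕ) = 0 then ε else if (i:ℕ) = d - 1 then y - ε else z with hq
    have hqsum : ∑ i, q i = 1 := by
      rw [hq, sum_tri hd, hz]
      field_simp
      rw [hc]; ring
    have hqnn : ∀ i, 0 ≤ q i := by
      intro i
      simp only [hq]
      split_ifs
      · linarith
      · linarith
      · exact hz0
    have hrnn : ∀ i, 0 ≤ r i := by
      intro i
      simp only [hr]
      split_ifs
      · exact le_refl _
      · linarith
      · exact hz0
    have hrsum : ∑ i, r i = 1 := by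
      rw [hr, sum_tri hd, hz]
      field_simp
      rw [hc]; ring
    have hHq : H q = (1 / (1 - α)) * (Real.log (g ε) / Real.log 2) := by
      rw [hH]
      have hgε : ∑ i, q i ^ α = g ε := by
        have h1 : ∀ i : Fin d, q i ^ α =
            (if (i:ℕ) = 0 then ε^α else if (i:ℕ) = d - 1 then (y-ε)^α else z^α) := by
          intro i; simp only [hq]; split_ifs <;> rfl
        rw [Finset.sum_congr rfl (fun i _ => h1 i), sum_tri hd]
        simp only [hg, hA]; ring
      rw [hgε, Real.logb]
    have hHr : H r = (1 / (1 - α)) * (Real.log (g 0) / Real.log 2) := by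
      rw [hH, hsumr, hg0, Real.logb]
    have habs := hk r q ⟨hrnn, hrsum⟩ ⟨hqnn, hqsum⟩
    have hsum2 : ∑ i, |r i - q i| = 2 * ε := by
      have h1 : ∀ i : Fin d, |r i - q i| =
          (if (i:ℕ) = 0 then ε else if (i:ℕ) = d - 1 then ε else 0) := by
        intro i
        simp only [hr, hq]
        split_ifs
        · rw [zero_sub, abs_neg, abs_of_pos hε0]
        · rw [show y - (y - ε) = ε by ring, abs_of_pos hε0]
        · simp
      rw [Finset.sum_congr rfl (fun i _ => h1 i), sum_tri hd]
      ring
    rw [hsum2, hHr, hHq] at habs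
    have hkε : (1 / (1 - α)) * (Real.log (g ε) / Real.log 2)
        - (1 / (1 - α)) * (Real.log (g 0) / Real.log 2) ≤ k * ε := by
      have : k * (1/2 * (2*ε)) = k * ε := by ring
      rw [this] at habs
      have h4 : (1 / (1 - α)) * (Real.log (g ε) / Real.log 2)
          - (1 / (1 - α)) * (Real.log (g 0) / Real.log 2)
          ≤ |(1 / (1 - α)) * (Real.log (g 0) / Real.log 2)
            - (1 / (1 - α)) * (Real.log (g ε) / Real.log 2)| := by
        rw [abs_sub_comm]
        exact le_abs_self _
      linarith
    have hsl : slope (fun ε => (1 / (1 - α)) * (Real.log (g ε) / Real.log 2)) 0 ε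
        = ((1 / (1 - α)) * (Real.log (g ε) / Real.log 2)
          - (1 / (1 - α)) * (Real.log (g 0) / Real.log 2)) / ε := by
      rw [slope_def_field]
      rw [sub_zero]
    rw [hsl, div_le_iff₀ hε0]
    calc (1 / (1 - α)) * (Real.log (g ε) / Real.log 2)
          - (1 / (1 - α)) * (Real.log (g 0) / Real.log 2) ≤ k * ε := hkε
      _ = k * ε := rfl
  have hΓk : Γ ≤ k := le_of_tendsto hslope hev
  rw [hsumr] at part1
  calc (α / (α - 1)) * c ^ (1 - 1 / α) / (2 * Real.log 2) ≤ Γ := part1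
    _ ≤ k := hΓk
end

section
/- For d ≥ 3, the optimal Lipschitz constant (with respect to total variation distance) of the collision entropy H₂(p) = −log₂(Σ_i p_i²) on the probability simplex in ℝ^d equals (d−2)/((√(d−1) − 1)·ln 2); in particular, sup over probability vectors with smallest entry x and largest entry y of (y − x)/(x² + y² + (d−2)z²), z = (1−x−y)/(d−2), is attained at x = 0, y = 1/√(d−1), where it equals (d−2)/(2√(d−1) − 2). -/
open Finset Real


lemma key_ineq_s19 {s x y : ℝ} (hs : 1 < s) (hx : 0 ≤ x) :
    2*(s-1)*(y-x) ≤ (s^2-1)*(x^2+y^2) + (1-x-y)^2 := by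
  nlinarith [sq_nonneg (s^2*y - s + x),
    mul_nonneg (mul_nonneg hx hx) (by nlinarith [sq_nonneg s, sq_nonneg (s^2-1)] : (0:ℝ) ≤ s^4 - 1),
    mul_nonneg hx (by nlinarith [sq_nonneg (s-1)] : (0:ℝ) ≤ 2*s*(s-1)^2), sq_nonneg s]

/-- split a sum over Fin d at two distinct points, rest constant. -/
lemma sum_split {d : ℕ} (hd : 3 ≤ d) {a b : Fin d} (hab : a ≠ b) (g : Fin d → ℝ) {u v w : ℝ}
    (ha : g a = u) (hb : g b = v) (hw : ∀ i, i ≠ a → i ≠ b → g i = w) :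
    ∑ i, g i = u + v + ((d:ℝ) - 2) * w := by
  rw [← Finset.add_sum_erase _ _ (Finset.mem_univ a)]
  rw [← Finset.add_sum_erase _ _ (Finset.mem_erase.2 ⟨hab.symm, Finset.mem_univ b⟩)]
  have hrest : ∑ i ∈ (Finset.univ.erase a).erase b, g i
      = (((Finset.univ.erase a).erase b).card : ℝ) * w := by
    rw [Finset.sum_congr rfl (fun i hi => ?_), Finset.sum_const, nsmul_eq_mul]
    simp only [Finset.mem_erase] at hi
    exact hw i hi.2.1 hi.1
  have hcard : ((Finset.univ.erase a).erase b).card = d - 2 := by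
    rw [Finset.card_erase_of_mem (Finset.mem_erase.2 ⟨hab.symm, Finset.mem_univ b⟩),
      Finset.card_erase_of_mem (Finset.mem_univ a)]
    simp only [Finset.card_univ, Fintype.card_fin]
    omega
  rw [hrest, hcard, ha, hb]
  have : ((d - 2 : ℕ) : ℝ) = (d:ℝ) - 2 := by
    have : (2:ℕ) ≤ d := by omega
    push_cast [this]; ring
  rw [this]; ring

/-- sum of squares lower bound via splitting at a,b. -/
lemma vec_bound_s19 {d : ℕ} (hd : 3 ≤ d) (r : Fin d → ℝ) (hr0 : ∀ i, 0 ≤ r i)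
    (hr1 : ∑ i, r i = 1) (a b : Fin d) :
    2*(Real.sqrt ((d:ℝ)-1) - 1) * (r b - r a) ≤ ((d:ℝ)-2) * ∑ i, r i^2 := by
  have hd3 : (3:ℝ) ≤ (d:ℝ) := by exact_mod_cast hd
  set s := Real.sqrt ((d:ℝ)-1) with hs_def
  have hs2 : s^2 = (d:ℝ)-1 := Real.sq_sqrt (by linarith)
  have hs1 : 1 < s := by
    nlinarith [Real.sqrt_nonneg ((d:ℝ)-1)]
  have hsum_sq_nonneg : (0:ℝ) ≤ ∑ i, r i ^ 2 := Finset.sum_nonneg fun i _ => sq_nonneg _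
  by_cases hab : a = b
  · subst hab; simp only [sub_self, mul_zero]
    exact mul_nonneg (by linarith) hsum_sq_nonneg
  -- split
  set T := (Finset.univ.erase a).erase b with hT
  have hbmem : b ∈ Finset.univ.erase a := Finset.mem_erase.2 ⟨fun h => hab h.symm, Finset.mem_univ b⟩
  have hcard : T.card = d - 2 := by
    rw [hT, Finset.card_erase_of_mem hbmem, Finset.card_erase_of_mem (Finset.mem_univ a)]
    simp only [Finset.card_univ, Fintype.card_fin]
    omega
  have hcardR : (T.card : ℝ) = (d:ℝ) - 2 := by
    rw [hcard]; have : (2:ℕ) ≤ d := by omega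
    push_cast [this]; ring
  have hsplit1 : ∑ i, r i = r a + r b + ∑ i ∈ T, r i := by
    rw [← Finset.add_sum_erase _ _ (Finset.mem_univ a), ← Finset.add_sum_erase _ _ hbmem, hT]; ring
  have hsplit2 : ∑ i, r i ^2 = r a^2 + r b^2 + ∑ i ∈ T, r i^2 := by
    rw [← Finset.add_sum_erase _ (fun i => r i ^2) (Finset.mem_univ a),
      ← Finset.add_sum_erase _ _ hbmem, hT]; ring
  have hm : ∑ i ∈ T, r i = 1 - r a - r b := by rw [hsplit1] at hr1; linarith
  have hCS : (1 - r a - r b)^2 ≤ ((d:ℝ) - 2) * ∑ i ∈ T, r i ^2 := by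
    have := sq_sum_le_card_mul_sum_sq (s := T) (f := r)
    rw [hm] at this; rw [← hcardR]; exact_mod_cast this
  have hkey := key_ineq_s19 (x := r a) (y := r b) hs1 (hr0 a)
  have hd2 : s^2 - 1 = (d:ℝ) - 2 := by rw [hs2]; ring
  rw [hd2] at hkey
  have hTnn : (0:ℝ) ≤ ∑ i ∈ T, r i ^2 := Finset.sum_nonneg fun i _ => sq_nonneg _
  nlinarith [hkey, hCS, hsplit2]

/-- ∑ r v ≤ D (y - x) when ∑ v = 0, x ≤ r ≤ y -/
lemma inner_bound {d : ℕ} (r v : Fin d → ℝ) {x y : ℝ} (hv : ∑ i, v i = 0)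
    (hlo : ∀ i, x ≤ r i) (hhi : ∀ i, r i ≤ y) :
    |∑ i, r i * v i| ≤ ((1/2) * ∑ i, |v i|) * (y - x) := by
  have hD : ∑ i, max (v i) 0 = (1/2) * ∑ i, |v i| := by
    have : ∀ i : Fin d, max (v i) 0 = (v i + |v i|)/2 := by
      intro i; rcases le_total (v i) 0 with h | h
      · rw [max_eq_right h, abs_of_nonpos h]; ring
      · rw [max_eq_left h, abs_of_nonneg h]; ring
    rw [Finset.sum_congr rfl (fun i _ => this i), ← Finset.sum_div, Finset.sum_add_distrib, hv]
    ring
  rw [abs_le]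
  constructor
  · -- lower:  -D(y-x) ≤ ∑ r v ;  use ∑ (r i - y) v i ≥ ∑ max(v i,0)(x-y)
    have h1 : ∀ i : Fin d, max (v i) 0 * (x - y) ≤ (r i - y) * v i := by
      intro i; rcases le_total 0 (v i) with h | h
      · rw [max_eq_left h]
        have := hlo i; have := hhi i
        nlinarith
      · rw [max_eq_right h]
        have := hhi i
        nlinarith
    have := Finset.sum_le_sum (s := Finset.univ) (fun i _ => h1 i)
    rw [← Finset.sum_mul, hD] at this
    have h2 : ∑ i, (r i - y) * v i = ∑ i, r i * v i := by
      rw [Finset.sum_congr rfl (fun i _ => by ring_nf :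
        ∀ i ∈ Finset.univ, (r i - y) * v i = r i * v i - y * v i)]
      rw [Finset.sum_sub_distrib, ← Finset.mul_sum, hv]; ring
    rw [h2] at this; linarith
  · have h1 : ∀ i : Fin d, (r i - x) * v i ≤ max (v i) 0 * (y - x) := by
      intro i; rcases le_total 0 (v i) with h | h
      · rw [max_eq_left h]; have := hlo i; have := hhi i; nlinarith
      · rw [max_eq_right h]; have := hlo i; nlinarith
    have := Finset.sum_le_sum (s := Finset.univ) (fun i _ => h1 i)
    rw [← Finset.sum_mul, hD] at this
    have h2 : ∑ i, (r i - x) * v i = ∑ i, r i * v i := by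
      rw [Finset.sum_congr rfl (fun i _ => by ring_nf :
        ∀ i ∈ Finset.univ, (r i - x) * v i = r i * v i - x * v i)]
      rw [Finset.sum_sub_distrib, ← Finset.mul_sum, hv]; ring
    rw [h2] at this; linarith

lemma lip_core {d : ℕ} (hd : 3 ≤ d) (p q : Fin d → ℝ)
    (hp0 : ∀ i, 0 ≤ p i) (hp1 : ∑ i, p i = 1)
    (hq0 : ∀ i, 0 ≤ q i) (hq1 : ∑ i, q i = 1) :
    |Real.log (∑ i, q i ^2) - Real.log (∑ i, p i ^2)|
      ≤ (Real.sqrt ((d:ℝ)-1) + 1) * ((1/2) * ∑ i, |p i - q i|) := by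
  have hd3 : (3:ℝ) ≤ (d:ℝ) := by exact_mod_cast hd
  set s := Real.sqrt ((d:ℝ)-1) with hs_def
  have hs2 : s^2 = (d:ℝ)-1 := Real.sq_sqrt (by linarith)
  have hs1 : 1 < s := by nlinarith [Real.sqrt_nonneg ((d:ℝ)-1)]
  set v : Fin d → ℝ := fun i => q i - p i with hv_def
  have hv : ∑ i, v i = 0 := by simp [hv_def, Finset.sum_sub_distrib, hp1, hq1]
  set D : ℝ := (1/2) * ∑ i, |p i - q i| with hD_def
  have habs : ∀ i, |v i| = |p i - q i| := fun i => by rw [hv_def]; exact abs_sub_comm _ _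
  set S : ℝ → ℝ := fun t => ∑ i, (p i + t * v i)^2 with hS_def
  set S' : ℝ → ℝ := fun t => ∑ i, 2*(p i + t * v i)*(v i) with hS'_def
  -- prob vector facts, for t ∈ Icc 0 1
  have hr0 : ∀ t ∈ Set.Icc (0:ℝ) 1, ∀ i, 0 ≤ p i + t * v i := by
    intro t ht i
    have : p i + t * v i = (1-t) * p i + t * q i := by rw [hv_def]; ring
    rw [this]
    exact add_nonneg (mul_nonneg (by linarith [ht.2]) (hp0 i)) (mul_nonneg ht.1 (hq0 i))
  have hr1 : ∀ t : ℝ, ∑ i, (p i + t * v i) = 1 := by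
    intro t
    rw [Finset.sum_add_distrib, ← Finset.mul_sum, hv, hp1]; ring
  have hSpos : ∀ t : ℝ, 0 < S t := by
    intro t
    have h1 : (1:ℝ) = (∑ i, (p i + t * v i))^2 := by rw [hr1]; norm_num
    have h2 := sq_sum_le_card_mul_sum_sq (s := (Finset.univ : Finset (Fin d)))
      (f := fun i => p i + t * v i)
    rw [← h1] at h2
    simp only [Finset.card_univ, Fintype.card_fin] at h2
    have hdpos : (0:ℝ) < d := by linarith
    by_contra h
    push_neg at h
    have : (d:ℝ) * S t ≤ 0 := mul_nonpos_of_nonneg_of_nonpos (le_of_lt hdpos) h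
    rw [hS_def] at this
    exact absurd (le_trans h2 this) (by norm_num)
  -- derivative
  have hderiv : ∀ t : ℝ, HasDerivAt (fun u => Real.log (S u)) (S' t / S t) t := by
    intro t
    have hS : HasDerivAt S (S' t) t := by
      rw [hS_def, hS'_def]
      apply HasDerivAt.fun_sum
      intro i _
      have h0 : HasDerivAt (fun u : ℝ => p i + u * v i) (v i) t := by
        simpa using ((hasDerivAt_id t).mul_const (v i)).const_add (p i)
      have := h0.pow 2
      exact this.congr_deriv (by rw [show (2:ℕ) - 1 = 1 from rfl]; push_cast; ring)
    exact hS.log (ne_of_gt (hSpos t))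
  -- bound on derivative for t ∈ Icc 0 1
  have hDnn : 0 ≤ D := by
    rw [hD_def]
    have : 0 ≤ ∑ i, |p i - q i| := Finset.sum_nonneg fun i _ => abs_nonneg _
    linarith
  have hbound : ∀ t ∈ Set.Icc (0:ℝ) 1, |S' t / S t| ≤ (s+1) * D := by
    intro t ht
    set r : Fin d → ℝ := fun i => p i + t * v i with hr_def
    have hne : (Finset.univ : Finset (Fin d)).Nonempty := ⟨⟨0, by omega⟩, Finset.mem_univ _⟩
    obtain ⟨a, _, ha⟩ := Finset.exists_min_image Finset.univ r hne
    obtain ⟨b, _, hb⟩ := Finset.exists_max_image Finset.univ r hne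
    have hib := inner_bound r v hv (fun i => ha i (Finset.mem_univ i)) (fun i => hb i (Finset.mem_univ i))
    have hvb := vec_bound_s19 hd r (hr0 t ht) (hr1 t) a b
    rw [← hs_def] at hvb
    have hSt : S t = ∑ i, r i ^2 := rfl
    have hSt' : S' t = 2 * ∑ i, r i * v i := by
      rw [hS'_def, Finset.mul_sum]
      exact Finset.sum_congr rfl fun i _ => by ring
    have hDsum : (1/2) * ∑ i, |v i| = D := by
      rw [hD_def, Finset.sum_congr rfl (fun i _ => habs i)]
    rw [hDsum] at hib
    -- |S' t| ≤ (s+1) * D * S t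
    have h1 : |S' t| ≤ (s+1) * D * S t := by
      rw [hSt', abs_mul, abs_two]
      have h2 : 2*(r b - r a) ≤ (s+1) * S t := by
        rw [hSt]
        have hsd : (d:ℝ) - 2 = (s-1)*(s+1) := by linear_combination -hs2
        rw [hsd] at hvb
        have hs1' : 0 < s - 1 := by linarith
        have h3 := (mul_le_mul_iff_right₀ hs1').mp
          (by nlinarith [hvb] : (s-1)*(2*(r b - r a)) ≤ (s-1)*((s+1)* ∑ i, r i ^2))
        linarith
      calc 2 * |∑ i, r i * v i| ≤ 2 * (D * (r b - r a)) := by linarith [hib]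
        _ ≤ D * ((s+1) * S t) := by nlinarith [h2, hDnn]
        _ = (s+1) * D * S t := by ring
    rw [abs_div, abs_of_pos (hSpos t)]
    rw [div_le_iff₀ (hSpos t)]
    calc |S' t| ≤ (s+1)*D*S t := h1
      _ = (s+1)*D*S t := rfl
  -- MVT
  have hmvt := Convex.norm_image_sub_le_of_norm_hasDerivWithin_le
    (f := fun u => Real.log (S u)) (f' := fun u => S' u / S u)
    (fun u _ => (hderiv u).hasDerivWithinAt)
    (fun u hu => by rw [Real.norm_eq_abs]; exact hbound u hu)
    (convex_Icc (0:ℝ) 1) (Set.left_mem_Icc.2 zero_le_one) (Set.right_mem_Icc.2 zero_le_one)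
  simp only [Real.norm_eq_abs] at hmvt
  have hS0 : S 0 = ∑ i, p i ^2 := by rw [hS_def]; simp
  have hS1 : S 1 = ∑ i, q i ^2 := by
    rw [hS_def]
    exact Finset.sum_congr rfl fun i _ => by rw [hv_def]; ring_nf
  rw [hS0, hS1] at hmvt
  have : |(1:ℝ) - 0| = 1 := by norm_num
  rw [this, mul_one] at hmvt
  exact hmvt

lemma val_eq {s : ℝ} (hs : 1 < s) :
    (1/s) / ((1/s)^2 + (s^2-1)*((1-1/s)/(s^2-1))^2) = (s^2-1)/(2*s-2) := by
  have h0 : s ≠ 0 := by linarith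
  have h1 : s - 1 ≠ 0 := by intro h; nlinarith
  have h2 : s^2 - 1 ≠ 0 := by intro h; nlinarith
  have h3 : s + 1 ≠ 0 := by nlinarith
  have hden : (1/s)^2 + (s^2-1)*((1-1/s)/(s^2-1))^2 = 2/(s*(s+1)) := by
    field_simp
    ring
  have h4 : 2*s - 2 ≠ 0 := by intro h; apply h1; linarith
  rw [hden]
  field_simp
  ring

lemma lower_bound {d : ℕ} (hd : 3 ≤ d) (H2 : (Fin d → ℝ) → ℝ)
    (hH2 : ∀ p, H2 p = -Real.logb 2 (∑ i, p i ^ 2)) (k : ℝ)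
    (hk : ∀ p q : Fin d → ℝ,
        ((∀ i, 0 ≤ p i) ∧ ∑ i, p i = 1) → ((∀ i, 0 ≤ q i) ∧ ∑ i, q i = 1) →
        |H2 p - H2 q| ≤ k * ((1 / 2) * ∑ i, |p i - q i|)) :
    ((d : ℝ) - 2) / ((Real.sqrt ((d : ℝ) - 1) - 1) * Real.log 2) ≤ k := by
  have hd3 : (3:ℝ) ≤ (d:ℝ) := by exact_mod_cast hd
  set s := Real.sqrt ((d:ℝ)-1) with hs_def
  have hs2 : s^2 = (d:ℝ)-1 := Real.sq_sqrt (by linarith)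
  have hs1 : 1 < s := by nlinarith [Real.sqrt_nonneg ((d:ℝ)-1)]
  have hdc : (d:ℝ) - 2 = s^2 - 1 := by linarith
  set y : ℝ := 1/s with hy_def
  have hy_pos : 0 < y := by rw [hy_def]; positivity
  have hy_lt1 : y < 1 := by
    rw [hy_def]; rw [div_lt_one (by linarith)]; exact hs1
  set z : ℝ := (1 - y)/((d:ℝ)-2) with hz_def
  have hdm2 : (0:ℝ) < (d:ℝ) - 2 := by linarith
  have hz_pos : 0 < z := by rw [hz_def]; apply div_pos <;> linarith
  -- the family of distributions
  have h01 : (0:ℕ) < d := by omega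
  have h11 : (1:ℕ) < d := by omega
  set a : Fin d := ⟨0, h01⟩ with ha_def
  set b : Fin d := ⟨1, h11⟩ with hb_def
  have hab : a ≠ b := by simp [ha_def, hb_def, Fin.ext_iff]
  set P : ℝ → Fin d → ℝ := fun t i => if i = a then t else if i = b then y - t else z with hP_def
  have hPa : ∀ t, P t a = t := fun t => by simp [hP_def]
  have hPb : ∀ t, P t b = y - t := fun t => by simp [hP_def, hab.symm]
  have hPo : ∀ t, ∀ i, i ≠ a → i ≠ b → P t i = z := fun t i hia hib => by
    simp [hP_def, hia, hib]
  have hPsum : ∀ t, ∑ i, P t i = 1 := by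
    intro t
    rw [sum_split hd hab (P t) (hPa t) (hPb t) (hPo t)]
    rw [hz_def]
    field_simp
    ring
  have hPsq : ∀ t, ∑ i, (P t i)^2 = t^2 + (y-t)^2 + ((d:ℝ)-2)*z^2 := by
    intro t
    exact sum_split hd hab (fun i => (P t i)^2)
      (by beta_reduce; rw [hPa t]) (by beta_reduce; rw [hPb t])
      (fun i hia hib => by beta_reduce; rw [hPo t i hia hib])
  have hPdiff : ∀ t : ℝ, 0 ≤ t → ∑ i, |P t i - P 0 i| = 2*t := by
    intro t ht
    have := sum_split hd hab (fun i => |P t i - P 0 i|) (u := t) (v := t) (w := 0)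
      (by beta_reduce; rw [hPa t, hPa 0, sub_zero, abs_of_nonneg ht])
      (by beta_reduce; rw [hPb t, hPb 0]; rw [show y - t - (y - 0) = -t by ring, abs_neg, abs_of_nonneg ht])
      (fun i hia hib => by beta_reduce; rw [hPo t i hia hib, hPo 0 i hia hib, sub_self, abs_zero])
    rw [this]; ring
  set A : ℝ → ℝ := fun t => t^2 + (y-t)^2 + ((d:ℝ)-2)*z^2 with hA_def
  have hApos : ∀ t, 0 < A t := by
    intro t; rw [hA_def]; positivity
  set G : ℝ → ℝ := fun t => (Real.log (A 0) - Real.log (A t)) / Real.log 2 with hG_def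
  have hG0 : G 0 = 0 := by rw [hG_def]; simp
  -- derivative of G at 0
  have hA' : HasDerivAt A (-(2*y)) 0 := by
    have h1 : HasDerivAt (fun t : ℝ => t^2) (0 : ℝ) 0 := by
      simpa using hasDerivAt_pow 2 (0:ℝ)
    have h2 : HasDerivAt (fun t : ℝ => (y - t)^2) (-(2*y)) 0 := by
      have hin : HasDerivAt (fun t : ℝ => y - t) (-1) 0 := by
        simpa using (hasDerivAt_id (0:ℝ)).const_sub y
      have h := hin.pow 2
      exact h.congr_deriv (by rw [show (2:ℕ) - 1 = 1 from rfl]; push_cast; ring)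
    have h3 : HasDerivAt (fun _ : ℝ => ((d:ℝ)-2)*z^2) (0:ℝ) 0 := hasDerivAt_const _ _
    have := (h1.add h2).add h3
    rw [hA_def]
    exact this.congr_deriv (by ring)
  have hlogA : HasDerivAt (fun t => Real.log (A t)) (-(2*y) / A 0) 0 :=
    hA'.log (ne_of_gt (hApos 0))
  have hG' : HasDerivAt G ((2*y / A 0) / Real.log 2) 0 := by
    rw [hG_def]
    have := ((hasDerivAt_const (0:ℝ) (Real.log (A 0))).sub hlogA).div_const (Real.log 2)
    exact this.congr_deriv (by ring)
  -- the derivative value equals the claimed constant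
  have hκ : (2*y / A 0) / Real.log 2 = ((d:ℝ)-2) / ((s-1)*Real.log 2) := by
    have hval := val_eq hs1
    have hA0 : A 0 = (1/s)^2 + (s^2-1)*((1-1/s)/(s^2-1))^2 := by
      rw [hA_def, hz_def, hy_def, hdc]
      ring
    have h2y : 2*y / A 0 = (s^2-1)/(s-1) := by
      have h1 : s - 1 ≠ 0 := by intro h; nlinarith
      have h4 : 2*s - 2 ≠ 0 := by intro h; apply h1; linarith
      have e1 : 2*y / A 0 = 2 * (y / A 0) := by ring
      rw [e1, hA0, hy_def, hval]
      field_simp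
    rw [show (2*y / A 0) / Real.log 2 = (2*y/A 0) * (1/Real.log 2) by ring, h2y, hdc]
    field_simp
  -- eventual bound on slope
  have hev : ∀ᶠ t in nhdsWithin 0 (Set.Ioi 0), slope G 0 t ≤ k := by
    have hmem : Set.Ioo (0:ℝ) y ∈ nhdsWithin 0 (Set.Ioi 0) :=
      Ioo_mem_nhdsGT_of_mem ⟨le_refl 0, hy_pos⟩
    filter_upwards [hmem] with t ht
    have ht0 : 0 < t := ht.1
    have hty : t < y := ht.2
    -- P t and P 0 are valid distributions
    have hvalid : ∀ u : ℝ, 0 ≤ u → u ≤ y → (∀ i, 0 ≤ P u i) ∧ ∑ i, P u i = 1 := by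
      intro u hu huy
      refine ⟨fun i => ?_, hPsum u⟩
      rw [hP_def]
      by_cases hia : i = a
      · simp only [if_pos hia]; exact hu
      · by_cases hib : i = b
        · simp only [if_neg hia, if_pos hib]; linarith
        · simp only [if_neg hia, if_neg hib]; linarith
    have hk1 := hk (P t) (P 0) (hvalid t (le_of_lt ht0) (le_of_lt hty)) (hvalid 0 le_rfl (le_of_lt hy_pos))
    rw [hPdiff t (le_of_lt ht0)] at hk1
    have hH : H2 (P t) - H2 (P 0) = G t := by
      rw [hH2, hH2, hPsq, hPsq, hG_def]
      simp only [Real.logb]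
      have e0 : (0:ℝ)^2 + (y-0)^2 + ((d:ℝ)-2)*z^2 = A 0 := by
        show _ = 0^2 + (y-0)^2 + ((d:ℝ)-2)*z^2
        ring
      have et : t^2 + (y-t)^2 + ((d:ℝ)-2)*z^2 = A t := rfl
      rw [e0, et]
      ring
    have hGt : G t ≤ k * t := by
      calc G t = H2 (P t) - H2 (P 0) := hH.symm
        _ ≤ |H2 (P t) - H2 (P 0)| := le_abs_self _
        _ ≤ k * ((1/2) * (2*t)) := hk1
        _ = k * t := by ring
    rw [slope_def_field, hG0, sub_zero, sub_zero, div_le_iff₀ ht0]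
    linarith [hGt]
  -- conclude
  have htend : Filter.Tendsto (slope G 0) (nhdsWithin 0 (Set.Ioi 0))
      (nhds ((2*y / A 0) / Real.log 2)) := by
    apply (hasDerivAt_iff_tendsto_slope.mp hG').mono_left
    apply nhdsWithin_mono
    intro x hx
    exact ne_of_gt hx
  have := le_of_tendsto htend hev
  rwa [hκ] at this

/-- For `d ≥ 3` the optimal Lipschitz constant of the collision entropy
`H₂(p) = -log₂ ∑ pᵢ²` w.r.t. total variation distance equals
`(d-2)/((√(d-1) - 1) ln 2)`; moreover the supremum of
`h(x,y) = (y-x)/(x² + y² + (d-2)z²)`, `z = (1-x-y)/(d-2)`, over the region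
`0 ≤ x ≤ 1/d ≤ y`, `x ≤ z ≤ y`, is attained at `x = 0`, `y = 1/√(d-1)`,
where it equals `(d-2)/(2√(d-1) - 2)`. -/
theorem stmt19 {d : ℕ} (hd : 3 ≤ d)
    (H2 : (Fin d → ℝ) → ℝ)
    (hH2 : ∀ p, H2 p = -Real.logb 2 (∑ i, p i ^ 2)) :
    IsLeast
      {k : ℝ | ∀ p q : Fin d → ℝ,
        ((∀ i, 0 ≤ p i) ∧ ∑ i, p i = 1) → ((∀ i, 0 ≤ q i) ∧ ∑ i, q i = 1) →
        |H2 p - H2 q| ≤ k * ((1 / 2) * ∑ i, |p i - q i|)}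
      (((d : ℝ) - 2) / ((Real.sqrt ((d : ℝ) - 1) - 1) * Real.log 2)) ∧
    (IsGreatest
      {v : ℝ | ∃ x y : ℝ, 0 ≤ x ∧ x ≤ 1 / d ∧ 1 / d ≤ y ∧
        x ≤ (1 - x - y) / ((d : ℝ) - 2) ∧ (1 - x - y) / ((d : ℝ) - 2) ≤ y ∧
        v = (y - x) /
          (x ^ 2 + y ^ 2 + ((d : ℝ) - 2) * ((1 - x - y) / ((d : ℝ) - 2)) ^ 2)}
      (((d : ℝ) - 2) / (2 * Real.sqrt ((d : ℝ) - 1) - 2)) ∧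
    ((1 / Real.sqrt ((d : ℝ) - 1) - 0) /
        (0 ^ 2 + (1 / Real.sqrt ((d : ℝ) - 1)) ^ 2 +
          ((d : ℝ) - 2) * ((1 - 0 - 1 / Real.sqrt ((d : ℝ) - 1)) / ((d : ℝ) - 2)) ^ 2) =
      ((d : ℝ) - 2) / (2 * Real.sqrt ((d : ℝ) - 1) - 2))) := by
  have hd3 : (3:ℝ) ≤ (d:ℝ) := by exact_mod_cast hd
  set s := Real.sqrt ((d:ℝ)-1) with hs_def
  have hs2 : s^2 = (d:ℝ)-1 := Real.sq_sqrt (by linarith)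
  have hs1 : 1 < s := by nlinarith [Real.sqrt_nonneg ((d:ℝ)-1)]
  have hs0 : 0 < s := by linarith
  have hdc : (d:ℝ) - 2 = s^2 - 1 := by linarith
  have hdm2 : (0:ℝ) < (d:ℝ) - 2 := by linarith
  have hdm2' : ((d:ℝ) - 2) ≠ 0 := ne_of_gt hdm2
  have hlog2 : 0 < Real.log 2 := Real.log_pos (by norm_num)
  have h2s2 : (0:ℝ) < 2*s - 2 := by linarith
  -- the value identity (third conjunct)
  have hval3 : (1 / s - 0) /
        (0 ^ 2 + (1 / s) ^ 2 + ((d : ℝ) - 2) * ((1 - 0 - 1 / s) / ((d : ℝ) - 2)) ^ 2) =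
      ((d : ℝ) - 2) / (2 * s - 2) := by
    rw [hdc]
    rw [show (1:ℝ) - 0 - 1/s = 1 - 1/s by ring, show (1/s - 0 : ℝ) = 1/s by ring,
      show ((0:ℝ)^2 + (1/s)^2 + (s^2-1)*((1-1/s)/(s^2-1))^2)
        = ((1/s)^2 + (s^2-1)*((1-1/s)/(s^2-1))^2) by ring]
    exact val_eq hs1
  refine ⟨⟨?_, ?_⟩, ⟨?_, ?_⟩, hval3⟩
  · -- membership: Lipschitz bound
    intro p q hp hq
    have hcore := lip_core hd p q hp.1 hp.2 hq.1 hq.2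
    rw [← hs_def] at hcore
    have heq : |H2 p - H2 q| = |Real.log (∑ i, q i ^2) - Real.log (∑ i, p i ^2)| / Real.log 2 := by
      rw [hH2 p, hH2 q]
      simp only [Real.logb]
      rw [show -(Real.log (∑ i, p i ^2) / Real.log 2) - -(Real.log (∑ i, q i ^2) / Real.log 2)
        = (Real.log (∑ i, q i ^2) - Real.log (∑ i, p i ^2)) / Real.log 2 by ring]
      rw [abs_div, abs_of_pos hlog2]
    rw [heq, div_le_iff₀ hlog2]
    have hKeq : ((d:ℝ) - 2) / ((s - 1) * Real.log 2) * ((1/2) * ∑ i, |p i - q i|) * Real.log 2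
        = (s + 1) * ((1/2) * ∑ i, |p i - q i|) := by
      have h1 : s - 1 ≠ 0 := by intro h; nlinarith
      rw [hdc]
      field_simp
      ring
    rw [hKeq]
    exact hcore
  · -- lower bound
    intro k hk
    exact lower_bound hd H2 hH2 k hk
  · -- IsGreatest membership
    refine ⟨0, 1/s, le_refl 0, by positivity, ?_, ?_, ?_, ?_⟩
    · -- 1/d ≤ 1/s
      have hsd : s ≤ (d:ℝ) := by nlinarith
      have hd0 : (0:ℝ) < (d:ℝ) := by linarith
      exact one_div_le_one_div_of_le hs0 hsd
    · -- 0 ≤ (1 - 0 - 1/s)/(d-2)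
      have h1s : 1/s ≤ 1 := by rw [div_le_one hs0]; linarith
      apply div_nonneg _ (le_of_lt hdm2)
      linarith
    · -- (1-0-1/s)/(d-2) ≤ 1/s
      rw [div_le_div_iff₀ hdm2 hs0]
      have e : (1 - 0 - 1/s) * s = s - 1 := by field_simp; ring
      rw [e]
      nlinarith
    · -- value
      exact hval3.symm
  · -- IsGreatest upper bound
    rintro v ⟨x, y, hx0, hx1d, h1dy, hxz, hzy, hveq⟩
    have hy0 : 0 < y := lt_of_lt_of_le (by positivity) h1dy
    set Q := x ^ 2 + y ^ 2 + ((d : ℝ) - 2) * ((1 - x - y) / ((d : ℝ) - 2)) ^ 2 with hQ_def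
    have hQpos : 0 < Q := by
      rw [hQ_def]
      have h3 : 0 ≤ ((d:ℝ)-2) * ((1-x-y)/((d:ℝ)-2))^2 := by positivity
      nlinarith [sq_nonneg x]
    have eQ : ((d:ℝ)-2) * Q = ((d:ℝ)-2)*(x^2+y^2) + (1-x-y)^2 := by
      rw [hQ_def]
      field_simp
    have hkey := key_ineq_s19 (s := s) (x := x) (y := y) hs1 hx0
    rw [hveq, div_le_div_iff₀ hQpos h2s2]
    nlinarith [hkey, eQ]
end
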